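/- arXiv:1805.03476 — 2 statements merged into one kernel-verified Lean document; each statement's English description precedes it below -/
import Mathlib

section
/- There is an absolute constant C such that for every z ∈ ℕ there exists a finite sequence w ∈ {0,1,2}* of length at most z^C with the following properties for every connected 3-regular graph G on n vertices and every starting vertex: (1) an agent following w in G visits at least min{z, n} distinct vertices; (2) following w yields a closed walk in G (the agent ends at its starting vertex). (In the paper, w is produced by a deterministic O(log z)-space algorithm.) -/
noncomputable section
open scoped Classical

/-- An undirected graph with locally labeled ports: vertex `v` has degree `deg v`,
and for a port `i < deg v`, `nbr v i` is the other endpoint of the edge with port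
number `i` at `v`, while `back v i` is the port number of this edge at the other
endpoint. -/
structure PGraph (V : Type) where
  deg : V → ℕ
  nbr : V → ℕ → V
  back : V → ℕ → ℕ

namespace PGraph

variable {V : Type}

/-- Well-formedness: positive degrees, ports of an edge match up at both
endpoints, no self-loops and no parallel edges. -/
def Wf (G : PGraph V) : Prop :=
  (∀ v, 0 < G.deg v) ∧
  (∀ v i, i < G.deg v → G.back v i < G.deg (G.nbr v i)) ∧
  (∀ v i, i < G.deg v → G.nbr (G.nbr v i) (G.back v i) = v) ∧
  (∀ v i, i < G.deg v → G.back (G.nbr v i) (G.back v i) = i) ∧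
  (∀ v i, i < G.deg v → G.nbr v i ≠ v) ∧
  (∀ v, Set.InjOn (G.nbr v) (Set.Iio (G.deg v)))

/-- Connectivity of a port-labeled graph. -/
def Conn (G : PGraph V) : Prop :=
  ∀ a b : V, Relation.ReflTransGen (fun x y => ∃ i, i < G.deg x ∧ G.nbr x i = y) a b

end PGraph

variable {V : Type}

/-- One step of an agent following an exploration sequence: at the pair
(current vertex, port of the edge back to the previous vertex) and offset `e`,
the agent leaves through the port `(lab + e) mod deg`. -/
def exStep (G : PGraph V) (c : V × ℕ) (e : ℕ) : V × ℕ :=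
  let i := (c.2 + e) % G.deg c.1
  (G.nbr c.1 i, G.back c.1 i)

/-- Position of an agent starting at `v0` after following the first `j` offsets
of the exploration sequence `w` (initially the back-port is `0`). -/
def exPos (G : PGraph V) (v0 : V) (w : List ℕ) (j : ℕ) : V :=
  ((w.take j).foldl (exStep G) (v0, 0)).1

section Abstract

variable {s : ℕ}

def aPort (l : Fin 3) (e : ℕ) : Fin 3 := ⟨(l.1 + e) % 3, by omega⟩

def aStep (f : Fin s → Fin 3 → Option (Fin s × Fin 3)) (c : Fin s × Fin 3) (e : ℕ) :
    Option (Fin s × Fin 3) := f c.1 (aPort c.2 e)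

def aRun (f : Fin s → Fin 3 → Option (Fin s × Fin 3)) (o : Option (Fin s × Fin 3))
    (l : List ℕ) : Option (Fin s × Fin 3) :=
  l.foldl (fun o e => o.bind (fun c => aStep f c e)) o

@[simp] lemma aRun_nil (f : Fin s → Fin 3 → Option (Fin s × Fin 3)) (o) : aRun f o [] = o := rfl

@[simp] lemma aRun_none (f : Fin s → Fin 3 → Option (Fin s × Fin 3)) (l : List ℕ) :
    aRun f none l = none := by
  induction l with
  | nil => rfl
  | cons e l ih => simpa [aRun] using ih

lemma aRun_cons (f : Fin s → Fin 3 → Option (Fin s × Fin 3)) (c) (e : ℕ) (l : List ℕ) :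
    aRun f (some c) (e :: l) = aRun f (aStep f c e) l := rfl

lemma aRun_append (f : Fin s → Fin 3 → Option (Fin s × Fin 3)) (o) (l₁ l₂ : List ℕ) :
    aRun f o (l₁ ++ l₂) = aRun f (aRun f o l₁) l₂ := by
  simp [aRun, List.foldl_append]

def cnt (f : Fin s → Fin 3 → Option (Fin s × Fin 3)) : ℕ → Fin s → ℕ
  | 0, _ => 1
  | t+1, u => ∑ p : Fin 3, (match f u p with | some vb => cnt f t vb.1 | none => 0)

def seqList {t : ℕ} (σ : Fin t → Fin 3) : List ℕ := List.map (fun e : Fin 3 => (e : ℕ)) (List.ofFn σ)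

@[simp] lemma seqList_length {t : ℕ} (σ : Fin t → Fin 3) : (seqList σ).length = t := by
  simp [seqList]

lemma seqList_lt {t : ℕ} (σ : Fin t → Fin 3) : ∀ e ∈ seqList σ, e < 3 := by
  intro e he
  rw [seqList, List.mem_map] at he
  obtain ⟨a, -, rfl⟩ := he
  exact a.isLt

lemma seqList_cons {t : ℕ} (e : Fin 3) (σ : Fin t → Fin 3) :
    seqList (Fin.cons e σ) = (e : ℕ) :: seqList σ := by
  simp [seqList, List.ofFn_succ]

lemma card_confined_le (f : Fin s → Fin 3 → Option (Fin s × Fin 3)) :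
    ∀ (t : ℕ) (u : Fin s) (l : Fin 3),
    ((Finset.univ : Finset (Fin t → Fin 3)).filter
      (fun σ => aRun f (some (u, l)) (seqList σ) ≠ none)).card ≤ cnt f t u := by
  intro t
  induction t with
  | zero =>
    intro u l
    have : ((Finset.univ : Finset (Fin 0 → Fin 3)).filter
        (fun σ => aRun f (some (u, l)) (seqList σ) ≠ none)).card ≤ Finset.univ.card :=
      Finset.card_filter_le _ _
    simpa [cnt] using this.trans (by simp)
  | succ t ih =>
    intro u l
    have aPort_val : ∀ (l e : Fin 3), aPort l (e : ℕ) = l + e := by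
      intro l e
      ext
      simp [aPort, Fin.add_def]
    set g : Fin 3 → ℕ := fun p => (match f u p with | some vb => cnt f t vb.1 | none => 0) with hg
    have hsplit : ((Finset.univ : Finset (Fin (t+1) → Fin 3)).filter
        (fun σ => aRun f (some (u, l)) (seqList σ) ≠ none)).card
        = ∑ e : Fin 3, (((Finset.univ : Finset (Fin (t+1) → Fin 3)).filter
            (fun σ => aRun f (some (u, l)) (seqList σ) ≠ none)).filter
            (fun σ => σ 0 = e)).card :=
      Finset.card_eq_sum_card_fiberwise (fun σ _ => Finset.mem_univ (σ 0))
    have hrun : ∀ (e : Fin 3) (σ : Fin (t+1) → Fin 3), σ 0 = e →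
        aRun f (some (u, l)) (seqList σ)
          = aRun f (aStep f (u, l) (e : ℕ)) (seqList (Fin.tail σ)) := by
      intro e σ h0
      conv_lhs => rw [← Fin.cons_self_tail σ, h0, seqList_cons, aRun_cons]
    have hfib : ∀ e : Fin 3,
        (((Finset.univ : Finset (Fin (t+1) → Fin 3)).filter
            (fun σ => aRun f (some (u, l)) (seqList σ) ≠ none)).filter
            (fun σ => σ 0 = e)).card ≤ g (l + e) := by
      intro e
      rcases hstep : aStep f (u, l) (e : ℕ) with _ | vb
      · have : (((Finset.univ : Finset (Fin (t+1) → Fin 3)).filter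
            (fun σ => aRun f (some (u, l)) (seqList σ) ≠ none)).filter
            (fun σ => σ 0 = e)) = ∅ := by
          apply Finset.filter_eq_empty_iff.2
          intro σ hσ h0
          rw [Finset.mem_filter] at hσ
          exact hσ.2 (by rw [hrun e σ h0, hstep, aRun_none])
        rw [this]
        simp
      · have hinj : (((Finset.univ : Finset (Fin (t+1) → Fin 3)).filter
            (fun σ => aRun f (some (u, l)) (seqList σ) ≠ none)).filter
            (fun σ => σ 0 = e)).card ≤
            ((Finset.univ : Finset (Fin t → Fin 3)).filter
              (fun σ' => aRun f (some (vb.1, vb.2)) (seqList σ') ≠ none)).card := by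
          apply Finset.card_le_card_of_injOn (fun σ => Fin.tail σ)
          · intro σ hσ
            rw [Finset.mem_coe, Finset.mem_filter] at hσ ⊢
            rcases hσ with ⟨hσ1, h0⟩
            rw [Finset.mem_filter] at hσ1
            refine ⟨Finset.mem_univ _, ?_⟩
            have := hσ1.2
            rw [hrun e σ h0, hstep] at this
            simpa using this
          · intro σ hσ τ hτ hst
            rw [Finset.coe_filter, Set.mem_setOf_eq] at hσ hτ
            rw [← Fin.cons_self_tail σ, ← Fin.cons_self_tail τ, hσ.2, hτ.2]
            simp only at hst
            rw [hst]
        refine hinj.trans ?_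
        have := ih vb.1 vb.2
        have hgoal : g (l + e) = cnt f t vb.1 := by
          rw [hg]
          simp only
          rw [← aPort_val l e]
          have : f u (aPort l (e : ℕ)) = some vb := hstep
          rw [this]
        rw [hgoal]
        exact this
    have hsum : ∑ e : Fin 3, g (l + e) = ∑ p : Fin 3, g p :=
      Fintype.sum_equiv (Equiv.addLeft l) _ _ (fun e => rfl)
    calc ((Finset.univ : Finset (Fin (t+1) → Fin 3)).filter
        (fun σ => aRun f (some (u, l)) (seqList σ) ≠ none)).card
        = ∑ e : Fin 3, _ := hsplit
      _ ≤ ∑ e : Fin 3, g (l + e) := Finset.sum_le_sum (fun e _ => hfib e)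
      _ = ∑ p : Fin 3, g p := hsum
      _ = cnt f (t+1) u := rfl

end Abstract


section Analytic

variable {s : ℕ} (f : Fin s → Fin 3 → Option (Fin s × Fin 3))

def Bmat (u v : Fin s) : ℕ :=
  (Finset.univ.filter (fun p : Fin 3 => (f u p).map Prod.fst = some v)).card

def df (u : Fin s) : ℕ :=
  (Finset.univ.filter (fun p : Fin 3 => f u p ≠ none)).card

def ValidS : Prop :=
  (∀ u v, Bmat f u v = Bmat f v u) ∧ (∀ u, Bmat f u u = 0) ∧
  ∃ u0 : Fin s, (∃ p0, f u0 p0 = none) ∧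
    ∀ u, Relation.ReflTransGen (fun a b => a ≠ b ∧ 0 < Bmat f a b) u u0

def SQ (x : Fin s → ℝ) : ℝ := ∑ u, (x u)^2
def Bap (x : Fin s → ℝ) : Fin s → ℝ := fun u => ∑ v, (Bmat f u v : ℝ) * x v
def QF (x : Fin s → ℝ) : ℝ := ∑ u, x u * Bap f x u
def Dq (x : Fin s → ℝ) : ℝ := ∑ u, ((3 : ℝ) - df f u) * (x u)^2
def Rq (x : Fin s → ℝ) : ℝ :=
  (1/2) * ∑ u, ∑ v, (Bmat f u v : ℝ) * (x u - x v)^2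

lemma df_le_three (u : Fin s) : df f u ≤ 3 := by
  have := Finset.card_filter_le (Finset.univ : Finset (Fin 3))
    (fun p : Fin 3 => f u p ≠ none)
  simpa [df] using this

lemma Bmat_row_sum (u : Fin s) : ∑ v, Bmat f u v = df f u := by
  unfold Bmat df
  rw [Finset.card_filter]
  simp_rw [Finset.card_filter]
  rw [Finset.sum_comm]
  apply Finset.sum_congr rfl
  intro p _
  rcases h : f u p with _ | vb
  · simp [h]
  · simp [h, Finset.sum_ite_eq]

lemma SQ_nonneg (x : Fin s → ℝ) : 0 ≤ SQ x :=
  Finset.sum_nonneg (fun u _ => sq_nonneg _)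

lemma Dq_nonneg (x : Fin s → ℝ) : 0 ≤ Dq f x := by
  apply Finset.sum_nonneg
  intro u _
  have := df_le_three f u
  have h3 : (df f u : ℝ) ≤ 3 := by exact_mod_cast this
  nlinarith [sq_nonneg (x u)]

lemma Rq_nonneg (x : Fin s → ℝ) : 0 ≤ Rq f x := by
  apply mul_nonneg (by norm_num)
  apply Finset.sum_nonneg
  intro u _
  apply Finset.sum_nonneg
  intro v _
  positivity

lemma QF_identity (x : Fin s → ℝ) (hsym : ∀ u v, Bmat f u v = Bmat f v u) :
    Dq f x + Rq f x = 3 * SQ x - QF f x := by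
  have hrow : ∀ u, (∑ v, (Bmat f u v : ℝ)) = (df f u : ℝ) := by
    intro u
    rw [← Nat.cast_sum, Bmat_row_sum]
  have hQF : QF f x = ∑ u, ∑ v, (Bmat f u v : ℝ) * (x u * x v) := by
    unfold QF Bap
    apply Finset.sum_congr rfl
    intro u _
    rw [Finset.mul_sum]
    apply Finset.sum_congr rfl
    intro v _
    ring
  have eqA : ∑ u, ∑ v, (Bmat f u v : ℝ) * (x u)^2 = ∑ u, (df f u : ℝ) * (x u)^2 := by
    apply Finset.sum_congr rfl
    intro u _
    rw [← Finset.sum_mul, hrow]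
  have eqC : ∑ u, ∑ v, (Bmat f u v : ℝ) * (x v)^2 = ∑ u, (df f u : ℝ) * (x u)^2 := by
    rw [Finset.sum_comm]
    apply Finset.sum_congr rfl
    intro v _
    rw [← Finset.sum_mul]
    congr 1
    rw [← hrow v]
    apply Finset.sum_congr rfl
    intro u _
    rw [hsym]
  have hsum : ∑ u, ∑ v, (Bmat f u v : ℝ) * (x u - x v)^2
      = (∑ u, (df f u : ℝ) * (x u)^2) - 2 * QF f x + (∑ u, (df f u : ℝ) * (x u)^2) := by
    have : ∀ u, ∑ v, (Bmat f u v : ℝ) * (x u - x v)^2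
        = (∑ v, (Bmat f u v : ℝ) * (x u)^2) - 2 * (∑ v, (Bmat f u v : ℝ) * (x u * x v))
          + (∑ v, (Bmat f u v : ℝ) * (x v)^2) := by
      intro u
      rw [Finset.mul_sum, ← Finset.sum_sub_distrib, ← Finset.sum_add_distrib]
      apply Finset.sum_congr rfl
      intro v _
      ring
    rw [Finset.sum_congr rfl (fun u _ => this u), Finset.sum_add_distrib,
      Finset.sum_sub_distrib, ← Finset.mul_sum, eqA, eqC, ← hQF]
  have hDq : Dq f x = 3 * SQ x - ∑ u, (df f u : ℝ) * (x u)^2 := by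
    unfold Dq SQ
    rw [Finset.mul_sum, ← Finset.sum_sub_distrib]
    apply Finset.sum_congr rfl
    intro u _
    ring
  unfold Rq
  rw [hsum, hDq]
  ring

end Analytic

section Analytic2

variable {s : ℕ} (f : Fin s → Fin 3 → Option (Fin s × Fin 3))

def SGf (hsym : ∀ u v, Bmat f u v = Bmat f v u) : SimpleGraph (Fin s) where
  Adj a b := a ≠ b ∧ 0 < Bmat f a b
  symm := by
    refine ⟨?_⟩
    intro a b h
    exact ⟨h.1.symm, by rw [hsym]; exact h.2⟩
  loopless := by
    refine ⟨?_⟩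
    intro a h
    exact h.1 rfl

lemma edge_sq_le (hsym : ∀ u v, Bmat f u v = Bmat f v u) (x : Fin s → ℝ) {a c : Fin s}
    (h : (SGf f hsym).Adj a c) : (x a - x c)^2 ≤ Rq f x := by
  have hB : (1 : ℝ) ≤ (Bmat f a c : ℝ) := by exact_mod_cast h.2
  have hBca : (1 : ℝ) ≤ (Bmat f c a : ℝ) := by
    rw [← hsym]
    exact hB
  have tnn : ∀ u v : Fin s, 0 ≤ (Bmat f u v : ℝ) * (x u - x v)^2 := by
    intro u v
    positivity
  set F : Fin s → ℝ := fun u => ∑ v, (Bmat f u v : ℝ) * (x u - x v)^2 with hF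
  have Fnn : ∀ u : Fin s, 0 ≤ F u := fun u => Finset.sum_nonneg (fun v _ => tnn u v)
  have hFa : (Bmat f a c : ℝ) * (x a - x c)^2 ≤ F a :=
    Finset.single_le_sum (fun v _ => tnn a v) (Finset.mem_univ c)
  have hFc : (Bmat f c a : ℝ) * (x c - x a)^2 ≤ F c :=
    Finset.single_le_sum (fun v _ => tnn c v) (Finset.mem_univ a)
  have hsum : F a + F c ≤ ∑ u, F u := by
    rw [← Finset.sum_pair h.1]
    exact Finset.sum_le_sum_of_subset_of_nonneg (Finset.subset_univ _) (fun u _ _ => Fnn u)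
  have hRq : Rq f x = (1/2) * ∑ u, F u := rfl
  have h1 : (x a - x c)^2 ≤ F a := by nlinarith [sq_nonneg (x a - x c)]
  have h2 : (x a - x c)^2 ≤ F c := by nlinarith [sq_nonneg (x c - x a)]
  rw [hRq]
  linarith

lemma walk_sq_le (hsym : ∀ u v, Bmat f u v = Bmat f v u) (x : Fin s → ℝ) {a b : Fin s}
    (p : (SGf f hsym).Walk a b) : (x a - x b)^2 ≤ (p.length : ℝ)^2 * Rq f x := by
  induction p with
  | nil => simp
  | @cons a c b h q ih =>
    have hedge := edge_sq_le f hsym x h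
    have hR := Rq_nonneg f x
    rw [SimpleGraph.Walk.length_cons]
    push_cast
    rcases Nat.eq_zero_or_pos q.length with hq | hq
    · have hv : (x c - x b)^2 ≤ 0 := by
        rw [hq] at ih
        simpa using ih
      have hv0 : x c - x b = 0 := by nlinarith [sq_nonneg (x c - x b)]
      have hab : x a - x b = x a - x c := by linarith
      rw [hab, hq]
      push_cast
      nlinarith
    · have hn1 : (1 : ℝ) ≤ (q.length : ℝ) := by exact_mod_cast hq
      have key : 0 ≤ (q.length : ℝ) *
          ((q.length : ℝ) * Rq f x - (x a - x c) * (x c - x b)) := by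
        nlinarith [sq_nonneg ((q.length : ℝ) * (x a - x c) - (x c - x b)),
          sq_nonneg ((q.length : ℝ)), ih, hedge]
      have huv : (x a - x c) * (x c - x b) ≤ (q.length : ℝ) * Rq f x := by
        nlinarith
      nlinarith [ih, hedge]

lemma rayleigh (hval : ValidS f) (hs : 1 ≤ s) (x : Fin s → ℝ) (hx : ∀ u, 0 ≤ x u) :
    SQ x ≤ 2 * (s : ℝ)^3 * (Dq f x + Rq f x) := by
  obtain ⟨hsym, hloop, u0, ⟨p0, hp0⟩, hreach⟩ := hval
  have hne : Nonempty (Fin s) := ⟨⟨0, hs⟩⟩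
  obtain ⟨um, -, hmax⟩ := Finset.exists_max_image (Finset.univ : Finset (Fin s)) x
    Finset.univ_nonempty
  have hSQm : SQ x ≤ (s : ℝ) * (x um)^2 := by
    have : SQ x ≤ ∑ _u : Fin s, (x um)^2 :=
      Finset.sum_le_sum (fun u _ => pow_le_pow_left₀ (hx u) (hmax u (Finset.mem_univ u)) 2)
    simpa [mul_comm] using this
  have hreach' : (SGf f hsym).Reachable um u0 := by
    rw [SimpleGraph.reachable_iff_reflTransGen]
    exact hreach um
  obtain ⟨q⟩ := hreach'
  have hlen : (q.toPath : (SGf f hsym).Walk um u0).length < s := by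
    have := SimpleGraph.Walk.IsPath.length_lt (q.toPath.2)
    simpa using this
  have hwalk := walk_sq_le f hsym x (q.toPath : (SGf f hsym).Walk um u0)
  have hR := Rq_nonneg f x
  have hD := Dq_nonneg f x
  have hlenR : ((q.toPath : (SGf f hsym).Walk um u0).length : ℝ) ≤ (s : ℝ) := by
    exact_mod_cast hlen.le
  have hwsq : (x um - x u0)^2 ≤ (s : ℝ)^2 * Rq f x := by
    refine hwalk.trans ?_
    apply mul_le_mul_of_nonneg_right _ hR
    have h0 : (0 : ℝ) ≤ ((q.toPath : (SGf f hsym).Walk um u0).length : ℝ) := by positivity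
    nlinarith
  have hdf : df f u0 ≤ 2 := by
    have hsub : Finset.univ.filter (fun p : Fin 3 => f u0 p ≠ none)
        ⊆ Finset.univ.erase p0 := by
      intro p hp
      rw [Finset.mem_filter] at hp
      refine Finset.mem_erase.2 ⟨?_, Finset.mem_univ _⟩
      intro hpe
      exact hp.2 (hpe ▸ hp0)
    have := Finset.card_le_card hsub
    rw [Finset.card_erase_of_mem (Finset.mem_univ _)] at this
    simpa [df] using this
  have hDu0 : (x u0)^2 ≤ Dq f x := by
    have hterm : (x u0)^2 ≤ ((3 : ℝ) - df f u0) * (x u0)^2 := by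
      have : (df f u0 : ℝ) ≤ 2 := by exact_mod_cast hdf
      nlinarith [sq_nonneg (x u0)]
    refine hterm.trans ?_
    apply Finset.single_le_sum (fun u _ => ?_) (Finset.mem_univ u0)
    have := df_le_three f u
    have h3 : (df f u : ℝ) ≤ 3 := by exact_mod_cast this
    nlinarith [sq_nonneg (x u)]
  have hs1 : (1 : ℝ) ≤ (s : ℝ) := by exact_mod_cast hs
  have hs0 : (0 : ℝ) ≤ (s : ℝ) := le_trans zero_le_one hs1
  have key : (x um)^2 ≤ 2*(x um - x u0)^2 + 2*(x u0)^2 := by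
    nlinarith [sq_nonneg (x um - 2 * x u0)]
  have t1 := mul_le_mul_of_nonneg_left key hs0
  have t2 := mul_le_mul_of_nonneg_left hwsq hs0
  have t3 := mul_le_mul_of_nonneg_left hDu0 hs0
  have hs3 : (s : ℝ) ≤ (s : ℝ)^3 := by nlinarith
  have t4 := mul_le_mul_of_nonneg_right hs3 hD
  nlinarith [t1, t2, t3, t4]

lemma QF_double (x : Fin s → ℝ) :
    QF f x = ∑ u, ∑ v, (Bmat f u v : ℝ) * (x u * x v) := by
  unfold QF Bap
  apply Finset.sum_congr rfl
  intro u _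
  rw [Finset.mul_sum]
  apply Finset.sum_congr rfl
  intro v _
  ring

lemma QF_abs_le (hval : ValidS f) (hs : 1 ≤ s) (z : ℕ) (hsz : s ≤ z) (x : Fin s → ℝ) :
    |QF f x| ≤ (3 - 1/(2*(z : ℝ)^3)) * SQ x := by
  have hsym := hval.1
  set y : Fin s → ℝ := fun u => |x u| with hy
  have hSQxy : SQ y = SQ x := by
    unfold SQ
    apply Finset.sum_congr rfl
    intro u _
    simp [hy, sq_abs]
  have habs : |QF f x| ≤ QF f y := by
    rw [QF_double, QF_double]
    refine (Finset.abs_sum_le_sum_abs _ _).trans ?_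
    apply Finset.sum_le_sum
    intro u _
    refine (Finset.abs_sum_le_sum_abs _ _).trans ?_
    apply Finset.sum_le_sum
    intro v _
    simp [hy, abs_mul, Nat.abs_cast]
  have hray := rayleigh f hval hs y (fun u => abs_nonneg _)
  have hid := QF_identity f y hsym
  have hz1 : (1 : ℝ) ≤ (z : ℝ) := by exact_mod_cast hs.trans hsz
  have hsz' : (s : ℝ) ≤ (z : ℝ) := by exact_mod_cast hsz
  have hs1 : (1 : ℝ) ≤ (s : ℝ) := by exact_mod_cast hs
  have hSQy : 0 ≤ SQ y := SQ_nonneg y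
  have hkey : QF f y ≤ (3 - 1/(2*(z : ℝ)^3)) * SQ y := by
    have h2s : (0:ℝ) < 2 * (s : ℝ)^3 := by positivity
    have h2z : (0:ℝ) < 2 * (z : ℝ)^3 := by positivity
    have hDR : (1/(2 * (s : ℝ)^3)) * SQ y ≤ Dq f y + Rq f y := by
      rw [div_mul_eq_mul_div, one_mul, div_le_iff₀ h2s]
      nlinarith [hray]
    have hfrac : (1/(2*(z : ℝ)^3)) * SQ y ≤ (1/(2*(s : ℝ)^3)) * SQ y := by
      apply mul_le_mul_of_nonneg_right _ hSQy
      apply one_div_le_one_div_of_le h2s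
      have := pow_le_pow_left₀ (le_trans zero_le_one hs1) hsz' 3
      linarith
    have hQFy : QF f y = 3 * SQ y - (Dq f y + Rq f y) := by linarith [hid]
    rw [hQFy, sub_mul]
    linarith
  calc |QF f x| ≤ QF f y := habs
    _ ≤ (3 - 1/(2*(z : ℝ)^3)) * SQ y := hkey
    _ = (3 - 1/(2*(z : ℝ)^3)) * SQ x := by rw [hSQxy]

lemma Bap_SQ_le (hsym : ∀ u v, Bmat f u v = Bmat f v u) (M : ℝ) (hM : 0 < M)
    (hQ : ∀ x, |QF f x| ≤ M * SQ x) (x : Fin s → ℝ) :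
    SQ (Bap f x) ≤ M^2 * SQ x := by
  set BL : (Fin s → ℝ) → (Fin s → ℝ) → ℝ := fun a b => ∑ u, ∑ v, (Bmat f u v : ℝ) * (a u * b v)
    with hBL
  have hQFBL : ∀ a : Fin s → ℝ, QF f a = BL a a := fun a => QF_double f a
  have hBLval : ∀ a b : Fin s → ℝ, (∑ u, a u * Bap f b u) = BL a b := by
    intro a b
    unfold Bap
    apply Finset.sum_congr rfl
    intro u _
    rw [Finset.mul_sum]
    apply Finset.sum_congr rfl
    intro v _
    ring
  have hBLsym : ∀ a b : Fin s → ℝ, BL a b = BL b a := by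
    intro a b
    rw [hBL]
    simp only
    rw [Finset.sum_comm]
    apply Finset.sum_congr rfl
    intro u _
    apply Finset.sum_congr rfl
    intro v _
    rw [hsym]
    ring
  have hpol : ∀ a b : Fin s → ℝ,
      4 * BL a b = QF f (fun u => a u + b u) - QF f (fun u => a u - b u) := by
    intro a b
    rw [QF_double, QF_double, ← Finset.sum_sub_distrib]
    have : ∀ u, (∑ v, (Bmat f u v : ℝ) * ((a u + b u) * (a v + b v)))
        - (∑ v, (Bmat f u v : ℝ) * ((a u - b u) * (a v - b v)))
        = ∑ v, ((Bmat f u v : ℝ) * (2 * (a u * b v)) + (Bmat f u v : ℝ) * (2 * (b u * a v))) := by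
      intro u
      rw [← Finset.sum_sub_distrib]
      apply Finset.sum_congr rfl
      intro v _
      ring
    rw [Finset.sum_congr rfl (fun u _ => this u)]
    have hsplit : ∑ u, ∑ v, ((Bmat f u v : ℝ) * (2 * (a u * b v))
        + (Bmat f u v : ℝ) * (2 * (b u * a v)))
        = 2 * BL a b + 2 * BL b a := by
      rw [hBL]
      simp only
      rw [Finset.mul_sum, Finset.mul_sum, ← Finset.sum_add_distrib]
      apply Finset.sum_congr rfl
      intro u _
      rw [Finset.mul_sum, Finset.mul_sum, ← Finset.sum_add_distrib]
      apply Finset.sum_congr rfl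
      intro v _
      ring
    rw [hsplit, ← hBLsym a b]
    ring
  have hbound : ∀ a b : Fin s → ℝ, 4 * BL a b ≤ 2 * M * (SQ a + SQ b) := by
    intro a b
    have h1 := hQ (fun u => a u + b u)
    have h2 := hQ (fun u => a u - b u)
    have hpar : SQ (fun u => a u + b u) + SQ (fun u => a u - b u) = 2 * SQ a + 2 * SQ b := by
      unfold SQ
      rw [← Finset.sum_add_distrib]
      rw [show (2:ℝ) * ∑ u, (a u)^2 + 2 * ∑ u, (b u)^2
          = ∑ u, (2 * (a u)^2 + 2 * (b u)^2) by
        rw [Finset.sum_add_distrib, Finset.mul_sum, Finset.mul_sum]]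
      apply Finset.sum_congr rfl
      intro u _
      ring
    have ha1 : QF f (fun u => a u + b u) ≤ M * SQ (fun u => a u + b u) :=
      le_trans (le_abs_self _) h1
    have ha2 : -(M * SQ (fun u => a u - b u)) ≤ QF f (fun u => a u - b u) := by
      have := neg_abs_le (QF f (fun u => a u - b u))
      nlinarith [h2]
    rw [hpol]
    nlinarith [SQ_nonneg (fun u => a u + b u), SQ_nonneg (fun u => a u - b u)]
  -- apply with a := (1/M) • Bap x, b := x
  set y := Bap f x with hy
  have hBLyx : BL y x = SQ y := by
    rw [← hBLval]
    unfold SQ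
    apply Finset.sum_congr rfl
    intro u _
    rw [← hy]
    ring
  have hscale : BL (fun u => (1/M) * y u) x = (1/M) * BL y x := by
    rw [hBL]
    simp only
    rw [Finset.mul_sum]
    apply Finset.sum_congr rfl
    intro u _
    rw [Finset.mul_sum]
    apply Finset.sum_congr rfl
    intro v _
    ring
  have hSQscale : SQ (fun u => (1/M) * y u) = (1/M)^2 * SQ y := by
    unfold SQ
    rw [Finset.mul_sum]
    apply Finset.sum_congr rfl
    intro u _
    ring
  have := hbound (fun u => (1/M) * y u) x
  rw [hscale, hBLyx, hSQscale] at this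
  have hMne : M ≠ 0 := ne_of_gt hM
  have hSQy : 0 ≤ SQ y := SQ_nonneg y
  have hSQx : 0 ≤ SQ x := SQ_nonneg x
  -- 4 (1/M) SQ y ≤ 2 M ((1/M)^2 SQ y + SQ x)
  have h4 : 4 * ((1/M) * SQ y) ≤ 2 * M * ((1/M)^2 * SQ y + SQ x) := this
  have hfin : (2/M) * SQ y ≤ 2 * M * SQ x := by
    have hexp : 2 * M * ((1/M)^2 * SQ y + SQ x) = (2/M) * SQ y + 2 * M * SQ x := by
      field_simp
    rw [hexp] at h4
    have : 4 * ((1/M) * SQ y) = (4/M) * SQ y := by ring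
    rw [this] at h4
    have h2M : (2/M) * SQ y = (4/M) * SQ y - (2/M) * SQ y := by ring
    linarith
  have hmul := mul_le_mul_of_nonneg_left hfin (by positivity : (0:ℝ) ≤ M/2)
  have hl : (M/2) * ((2/M) * SQ y) = SQ y := by
    field_simp
  have hr : (M/2) * (2 * M * SQ x) = M^2 * SQ x := by ring
  rw [hl, hr] at hmul
  exact hmul

lemma cnt_cast_succ (t : ℕ) (u : Fin s) :
    (cnt f (t+1) u : ℝ) = Bap f (fun v => (cnt f t v : ℝ)) u := by
  have h1 : (cnt f (t+1) u : ℝ) = ∑ p : Fin 3, (match f u p with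
      | some vb => (cnt f t vb.1 : ℝ) | none => 0) := by
    rw [cnt, Nat.cast_sum]
    apply Finset.sum_congr rfl
    intro p _
    rcases h : f u p with _ | vb <;> simp [h]
  rw [h1]
  unfold Bap
  have h2 : ∀ p : Fin 3, (match f u p with
      | some vb => (cnt f t vb.1 : ℝ) | none => 0)
      = ∑ v, if (f u p).map Prod.fst = some v then (cnt f t v : ℝ) else 0 := by
    intro p
    rcases h : f u p with _ | vb
    · simp [h]
    · simp only [Option.map_some, Option.some.injEq]
      rw [Finset.sum_ite_eq]
      simp
  rw [Finset.sum_congr rfl (fun p _ => h2 p), Finset.sum_comm]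
  apply Finset.sum_congr rfl
  intro v _
  rw [Bmat, Finset.card_filter]
  push_cast
  rw [Finset.sum_mul]
  apply Finset.sum_congr rfl
  intro p _
  rw [ite_mul, one_mul, zero_mul]

lemma cnt_le_bound (hval : ValidS f) (hs : 1 ≤ s) (z : ℕ) (hsz : s ≤ z) (T : ℕ) (u : Fin s) :
    (cnt f T u : ℝ) ≤ (3 - 1/(2*(z:ℝ)^3))^T * s := by
  set M : ℝ := 3 - 1/(2*(z:ℝ)^3) with hM
  have hz1 : (1:ℝ) ≤ (z:ℝ) := by exact_mod_cast hs.trans hsz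
  have hz3 : (2:ℝ) ≤ 2*(z:ℝ)^3 := by nlinarith [one_le_pow₀ hz1 (n := 3)]
  have hfr : 1/(2*(z:ℝ)^3) ≤ 1/2 := by
    apply one_div_le_one_div_of_le (by norm_num) hz3
  have hMpos : 0 < M := by rw [hM]; linarith
  have hM0 : 0 ≤ M := hMpos.le
  have hSQle : ∀ t, SQ (fun v => (cnt f t v : ℝ)) ≤ M^(2*t) * s := by
    intro t
    induction t with
    | zero =>
      have : SQ (fun v => (cnt f 0 v : ℝ)) = s := by
        unfold SQ cnt
        simp
      rw [this]
      simp
    | succ t ih =>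
      have hfun : (fun v => (cnt f (t+1) v : ℝ)) = Bap f (fun v => (cnt f t v : ℝ)) :=
        funext (cnt_cast_succ f t)
      rw [hfun]
      have hop := Bap_SQ_le f hval.1 M hMpos
        (fun x => QF_abs_le f hval hs z hsz x) (fun v => (cnt f t v : ℝ))
      calc SQ (Bap f (fun v => (cnt f t v : ℝ)))
          ≤ M^2 * SQ (fun v => (cnt f t v : ℝ)) := hop
        _ ≤ M^2 * (M^(2*t) * s) := by
            apply mul_le_mul_of_nonneg_left ih (by positivity)
        _ = M^(2*(t+1)) * s := by ring
  have h1 : ((cnt f T u : ℝ))^2 ≤ SQ (fun v => (cnt f T v : ℝ)) := by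
    unfold SQ
    exact Finset.single_le_sum (fun v _ => sq_nonneg ((cnt f T v : ℝ))) (Finset.mem_univ u)
  have hs0 : (0:ℝ) ≤ (s:ℝ) := by positivity
  have hs2 : (s:ℝ) ≤ (s:ℝ)^2 := by
    have hs1 : (1:ℝ) ≤ (s:ℝ) := by exact_mod_cast hs
    nlinarith
  have h2 : SQ (fun v => (cnt f T v : ℝ)) ≤ (M^T * s)^2 := by
    calc SQ (fun v => (cnt f T v : ℝ)) ≤ M^(2*T) * s := hSQle T
      _ ≤ M^(2*T) * (s:ℝ)^2 := by
          apply mul_le_mul_of_nonneg_left hs2 (by positivity)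
      _ = (M^T * s)^2 := by
          rw [mul_pow, ← pow_mul, mul_comm T 2]
  have hc0 : (0:ℝ) ≤ (cnt f T u : ℝ) := by positivity
  have hd0 : (0:ℝ) ≤ M^T * s := by positivity
  nlinarith [h1, h2]

lemma validS_pos {s : ℕ} (f : Fin s → Fin 3 → Option (Fin s × Fin 3)) (h : ValidS f) :
    1 ≤ s := by
  obtain ⟨-, -, u0, -⟩ := h
  exact u0.pos

end Analytic2


section Choice

def bigBad (T : ℕ) (s : ℕ) : Finset (Fin T → Fin 3) :=
  Finset.univ.biUnion (fun fu : (Fin s → Fin 3 → Option (Fin s × Fin 3)) × Fin s =>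
    if ValidS fu.1 then
      Finset.univ.filter (fun σ : Fin T → Fin 3 => aRun fu.1 (some (fu.2, 0)) (seqList σ) ≠ none)
    else ∅)

lemma exists_good_seq (z T : ℕ) (hz : 1 ≤ z)
    (hT : (z:ℝ)^3 * (((3*z+1) : ℕ) : ℝ)^(3*z) * (3 - 1/(2*(z:ℝ)^3))^T < 3^T) :
    ∃ σ : Fin T → Fin 3, ∀ s : ℕ, s < z →
      ∀ f : Fin s → Fin 3 → Option (Fin s × Fin 3), ValidS f →
      ∀ u : Fin s, aRun f (some (u, 0)) (seqList σ) = none := by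
  set M : ℝ := 3 - 1/(2*(z:ℝ)^3) with hM
  have hz1 : (1:ℝ) ≤ (z:ℝ) := by exact_mod_cast hz
  have hz3 : (2:ℝ) ≤ 2*(z:ℝ)^3 := by nlinarith [one_le_pow₀ hz1 (n := 3)]
  have hfr : 1/(2*(z:ℝ)^3) ≤ 1/2 := one_div_le_one_div_of_le (by norm_num) hz3
  have hM0 : (0:ℝ) ≤ M := by rw [hM]; linarith
  by_contra hcon
  push_neg at hcon
  have hsub : (Finset.univ : Finset (Fin T → Fin 3)) ⊆ (Finset.range z).biUnion (bigBad T) := by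
    intro σ _
    obtain ⟨s, hsz, f, hval, u, hbad⟩ := hcon σ
    refine Finset.mem_biUnion.2 ⟨s, Finset.mem_range.2 hsz, ?_⟩
    refine Finset.mem_biUnion.2 ⟨(f, u), Finset.mem_univ _, ?_⟩
    rw [if_pos hval]
    exact Finset.mem_filter.2 ⟨Finset.mem_univ _, hbad⟩
  have hcarduniv : (Finset.univ : Finset (Fin T → Fin 3)).card = 3^T := by
    rw [Finset.card_univ]
    simp [Fintype.card_fun]
  have hcard : (3:ℕ)^T ≤ ((Finset.range z).biUnion (bigBad T)).card := by
    have := Finset.card_le_card hsub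
    rwa [hcarduniv] at this
  have hterm : ∀ s, s < z →
      ∀ fu : (Fin s → Fin 3 → Option (Fin s × Fin 3)) × Fin s,
      (((if ValidS fu.1 then
          Finset.univ.filter
            (fun σ : Fin T → Fin 3 => aRun fu.1 (some (fu.2, 0)) (seqList σ) ≠ none)
        else ∅) : Finset (Fin T → Fin 3)).card : ℝ) ≤ M^T * z := by
    intro s hsz fu
    by_cases hval : ValidS fu.1
    · rw [if_pos hval]
      have h1 := card_confined_le fu.1 T fu.2 0
      have h2 := cnt_le_bound fu.1 hval (validS_pos fu.1 hval) z hsz.le T fu.2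
      have h3 : ((Finset.univ.filter
          (fun σ : Fin T → Fin 3 => aRun fu.1 (some (fu.2, 0)) (seqList σ) ≠ none)).card : ℝ)
          ≤ (cnt fu.1 T fu.2 : ℝ) := by exact_mod_cast h1
      refine h3.trans (h2.trans ?_)
      have : (s:ℝ) ≤ (z:ℝ) := by exact_mod_cast hsz.le
      have hMT : (0:ℝ) ≤ M^T := by positivity
      nlinarith
    · rw [if_neg hval]
      simp only [Finset.card_empty, Nat.cast_zero]
      positivity
  have hNs : ∀ s, s < z →
      (Fintype.card ((Fin s → Fin 3 → Option (Fin s × Fin 3)) × Fin s) : ℝ)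
        ≤ (((3*z+1) : ℕ) : ℝ)^(3*z) * z := by
    intro s hsz
    have h1 : Fintype.card ((Fin s → Fin 3 → Option (Fin s × Fin 3)) × Fin s)
        = (3*s+1)^(3*s) * s := by
      rw [Fintype.card_prod, Fintype.card_fun, Fintype.card_fun]
      simp only [Fintype.card_option, Fintype.card_prod, Fintype.card_fin]
      rw [← pow_mul]
      ring_nf
    rw [h1]
    have h2 : (3*s+1)^(3*s) * s ≤ (3*z+1)^(3*z) * z := by
      apply Nat.mul_le_mul _ hsz.le
      calc (3*s+1)^(3*s) ≤ (3*z+1)^(3*s) := Nat.pow_le_pow_left (by omega) _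
        _ ≤ (3*z+1)^(3*z) := Nat.pow_le_pow_right (by omega) (by omega)
    exact_mod_cast h2
  have hbigBad : ∀ s, s < z → ((bigBad T s).card : ℝ)
      ≤ (((3*z+1) : ℕ) : ℝ)^(3*z) * z * (M^T * z) := by
    intro s hsz
    have h1 : (bigBad T s).card ≤ ∑ fu : (Fin s → Fin 3 → Option (Fin s × Fin 3)) × Fin s,
        ((if ValidS fu.1 then
          Finset.univ.filter
            (fun σ : Fin T → Fin 3 => aRun fu.1 (some (fu.2, 0)) (seqList σ) ≠ none)
        else ∅) : Finset (Fin T → Fin 3)).card := Finset.card_biUnion_le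
    have h2 : ((bigBad T s).card : ℝ) ≤ ∑ fu : (Fin s → Fin 3 → Option (Fin s × Fin 3)) × Fin s,
        (((if ValidS fu.1 then
          Finset.univ.filter
            (fun σ : Fin T → Fin 3 => aRun fu.1 (some (fu.2, 0)) (seqList σ) ≠ none)
        else ∅) : Finset (Fin T → Fin 3)).card : ℝ) := by exact_mod_cast h1
    refine h2.trans ?_
    have h3 := Finset.sum_le_card_nsmul Finset.univ _ (M^T * z)
      (fun fu _ => hterm s hsz fu)
    rw [Finset.card_univ, nsmul_eq_mul] at h3
    refine h3.trans ?_
    have hMTz : (0:ℝ) ≤ M^T * z := by positivity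
    have := hNs s hsz
    nlinarith
  have htotal : (((Finset.range z).biUnion (bigBad T)).card : ℝ)
      ≤ (z:ℝ)^3 * (((3*z+1) : ℕ) : ℝ)^(3*z) * M^T := by
    have h1 : ((Finset.range z).biUnion (bigBad T)).card
        ≤ ∑ s ∈ Finset.range z, (bigBad T s).card := Finset.card_biUnion_le
    have h2 : (((Finset.range z).biUnion (bigBad T)).card : ℝ)
        ≤ ∑ s ∈ Finset.range z, ((bigBad T s).card : ℝ) := by exact_mod_cast h1
    refine h2.trans ?_
    have h3 := Finset.sum_le_card_nsmul (Finset.range z) _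
      ((((3*z+1) : ℕ) : ℝ)^(3*z) * z * (M^T * z))
      (fun s hs => hbigBad s (Finset.mem_range.1 hs))
    rw [Finset.card_range, nsmul_eq_mul] at h3
    refine h3.trans (le_of_eq ?_)
    ring
  have hfinal : ((3:ℕ)^T : ℝ) ≤ (z:ℝ)^3 * (((3*z+1) : ℕ) : ℝ)^(3*z) * M^T := by
    refine le_trans ?_ htotal
    exact_mod_cast hcard
  rw [hM] at hfinal
  have : ((3:ℕ)^T : ℝ) = (3:ℝ)^T := by push_cast; ring
  rw [this] at hfinal
  linarith

end Choice


lemma numeric_bound (z : ℕ) (hz : 1 ≤ z) :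
    (z:ℝ)^3 * (((3*z+1) : ℕ) : ℝ)^(3*z)
      * (3 - 1/(2*(z:ℝ)^3))^(12*z^3*(6*z^2+3*z+1))
      < 3^(12*z^3*(6*z^2+3*z+1)) := by
  have hz1 : (1:ℝ) ≤ (z:ℝ) := by exact_mod_cast hz
  have hz3 : (1:ℝ) ≤ (z:ℝ)^3 := one_le_pow₀ hz1
  set δ : ℝ := 1/(6*(z:ℝ)^3) with hδ
  set m := 12*z^3 with hm
  set k := 6*z^2+3*z+1 with hk
  have hδpos : 0 < δ := by rw [hδ]; positivity
  have hδle : δ ≤ 1/6 := by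
    rw [hδ]
    apply one_div_le_one_div_of_le (by norm_num)
    linarith
  have hzne : (z:ℝ) ≠ 0 := by positivity
  have hMeq : 3 - 1/(2*(z:ℝ)^3) = 3*(1-δ) := by
    rw [hδ]
    field_simp
    ring
  have hmδ : (m:ℝ)*δ = 2 := by
    rw [hδ, hm]
    push_cast
    field_simp
    ring
  have h13 : (1-δ)^m ≤ 1/3 := by
    have hB : (3:ℝ) ≤ (1+δ)^m := by
      have := one_add_mul_le_pow (a := δ) (by linarith) m
      rw [hmδ] at this
      linarith
    have hA : (1-δ)^m * (1+δ)^m ≤ 1 := by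
      rw [← mul_pow]
      have he : (1-δ)*(1+δ) = 1 - δ^2 := by ring
      rw [he]
      apply pow_le_one₀ (by nlinarith) (by nlinarith)
    nlinarith [pow_nonneg (by linarith : (0:ℝ) ≤ 1-δ) m]
  have hzp : ((3*z+1:ℕ):ℝ) ≤ 3^(2*z) := by
    have h9 : (1:ℝ) + (z:ℝ)*8 ≤ 9^z := by
      have := one_add_mul_le_pow (a := (8:ℝ)) (by norm_num) z
      norm_num at this
      linarith
    have h9e : (9:ℝ)^z = 3^(2*z) := by
      rw [show (9:ℝ) = 3^2 by norm_num, ← pow_mul]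
    push_cast
    rw [← h9e]
    linarith
  have hP : ((3*z+1:ℕ):ℝ)^(3*z) ≤ 3^(6*z^2) := by
    calc ((3*z+1:ℕ):ℝ)^(3*z) ≤ ((3:ℝ)^(2*z))^(3*z) :=
          pow_le_pow_left₀ (by positivity) hzp (3*z)
      _ = 3^(6*z^2) := by
          rw [← pow_mul]
          congr 1
          ring
  have hz3' : (z:ℝ)^3 ≤ 3^(3*z) := by
    have h1 : (z:ℝ) ≤ 3^z := by
      have := Nat.lt_pow_self (n := z) (by norm_num : 1 < 3)
      exact_mod_cast this.le
    calc (z:ℝ)^3 ≤ ((3:ℝ)^z)^3 := pow_le_pow_left₀ (by positivity) h1 3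
      _ = 3^(3*z) := by rw [← pow_mul]; congr 1; ring
  have hMT : (3 - 1/(2*(z:ℝ)^3))^(m*k) ≤ 3^(m*k) * (1/3)^k := by
    rw [hMeq, mul_pow]
    apply mul_le_mul_of_nonneg_left _ (by positivity)
    rw [pow_mul]
    exact pow_le_pow_left₀ (pow_nonneg (by linarith) m) h13 k
  have key : (3:ℝ)^(3*z) * 3^(6*z^2) * (1/3)^k = 1/3 := by
    have h3k : (3:ℝ)^k = 3^(3*z) * 3^(6*z^2) * 3 := by
      rw [hk, show 6*z^2+3*z+1 = (3*z + 6*z^2) + 1 by ring, pow_add, pow_add]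
      ring
    have hAne : (3:ℝ)^(3*z) * 3^(6*z^2) ≠ 0 := by positivity
    rw [div_pow, one_pow, h3k]
    field_simp
  have hTmk : 12*z^3*(6*z^2+3*z+1) = m * k := by rw [hm, hk]
  rw [hTmk]
  have hMnn : (0:ℝ) ≤ (3 - 1/(2*(z:ℝ)^3))^(m*k) := by
    apply pow_nonneg
    rw [hMeq]
    nlinarith
  have step1 : (z:ℝ)^3 * (((3*z+1) : ℕ) : ℝ)^(3*z) ≤ 3^(3*z) * 3^(6*z^2) :=
    mul_le_mul hz3' hP (by positivity) (by positivity)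
  have step2 : (z:ℝ)^3 * (((3*z+1) : ℕ) : ℝ)^(3*z) * (3 - 1/(2*(z:ℝ)^3))^(m*k)
      ≤ (3^(3*z) * 3^(6*z^2)) * (3^(m*k) * (1/3)^k) :=
    mul_le_mul step1 hMT hMnn (by positivity)
  have step3 : (3^(3*z) * 3^(6*z^2)) * ((3:ℝ)^(m*k) * (1/3)^k)
      = 3^(m*k) * (3^(3*z) * 3^(6*z^2) * (1/3)^k) := by ring
  rw [step3, key] at step2
  have hpos : (0:ℝ) < 3^(m*k) := by positivity
  linarith


def neg3 (e : ℕ) : ℕ := (3 - e % 3) % 3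

lemma neg3_lt (e : ℕ) : neg3 e < 3 := by unfold neg3; omega

section Undo

variable (G : PGraph V)

lemma exStep_back_lt (hwf : G.Wf) (h3 : ∀ v, G.deg v = 3) (c : V × ℕ) (e : ℕ) :
    (exStep G c e).2 < 3 := by
  have hi : (c.2 + e) % G.deg c.1 < G.deg c.1 :=
    Nat.mod_lt _ (by rw [h3 c.1]; norm_num)
  have h := hwf.2.1 c.1 _ hi
  rw [h3 (G.nbr c.1 ((c.2 + e) % G.deg c.1))] at h
  exact h

lemma exStep_undo (hwf : G.Wf) (h3 : ∀ v, G.deg v = 3) :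
    ∀ (rest : List ℕ) (e : ℕ) (c : V × ℕ), c.2 < 3 →
    List.foldl (exStep G) (List.foldl (exStep G) c (e :: rest))
      (0 :: (rest.reverse.map neg3)) = (c.1, (c.2 + e) % 3) := by
  intro rest
  induction rest with
  | nil =>
    intro e c hc2
    have hd : G.deg c.1 = 3 := h3 c.1
    set p := (c.2 + e) % G.deg c.1 with hp
    have hplt : p < G.deg c.1 := Nat.mod_lt _ (by rw [hd]; norm_num)
    have hback := hwf.2.1 c.1 p hplt
    simp only [List.reverse_nil, List.map_nil, List.foldl_cons, List.foldl_nil]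
    show exStep G (exStep G c e) 0 = (c.1, (c.2 + e) % 3)
    have hc' : exStep G c e = (G.nbr c.1 p, G.back c.1 p) := rfl
    rw [hc']
    unfold exStep
    simp only
    have hb3 : G.back c.1 p < G.deg (G.nbr c.1 p) := hback
    have hmod : (G.back c.1 p + 0) % G.deg (G.nbr c.1 p) = G.back c.1 p := by
      rw [Nat.add_zero]
      exact Nat.mod_eq_of_lt hb3
    rw [hmod, hwf.2.2.1 c.1 p hplt, hwf.2.2.2.1 c.1 p hplt, hp, hd]
  | cons h t ih =>
    intro e c hc2
    have hd : G.deg c.1 = 3 := h3 c.1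
    set c' := exStep G c e with hc'
    have hc'2 : c'.2 < 3 := exStep_back_lt G hwf h3 c e
    have hseq : (0 : ℕ) :: ((h :: t).reverse.map neg3)
        = ((0 : ℕ) :: (t.reverse.map neg3)) ++ [neg3 h] := by
      rw [List.reverse_cons, List.map_append]
      rfl
    rw [hseq]
    have hfold : List.foldl (exStep G) c (e :: h :: t)
        = List.foldl (exStep G) c' (h :: t) := rfl
    rw [hfold, List.foldl_append]
    rw [ih h c' hc'2]
    simp only [List.foldl_cons, List.foldl_nil]
    set p := (c.2 + e) % G.deg c.1 with hp
    have hplt : p < G.deg c.1 := Nat.mod_lt _ (by rw [hd]; norm_num)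
    have hc'eq : c' = (G.nbr c.1 p, G.back c.1 p) := rfl
    unfold exStep
    simp only
    have hd' : G.deg c'.1 = 3 := h3 c'.1
    have hmod : ((c'.2 + h) % 3 + neg3 h) % G.deg c'.1 = c'.2 := by
      rw [hd']
      unfold neg3
      omega
    rw [hmod]
    have h1 : G.nbr c'.1 c'.2 = c.1 := by
      rw [hc'eq]
      exact hwf.2.2.1 c.1 p hplt
    have h2 : G.back c'.1 c'.2 = p := by
      rw [hc'eq]
      exact hwf.2.2.2.1 c.1 p hplt
    rw [h1, h2, hp, hd]

lemma closed_walk (hwf : G.Wf) (h3 : ∀ v, G.deg v = 3) (v0 : V) (e : ℕ) (rest : List ℕ) :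
    exPos G v0 ((e :: rest) ++ ((0 : ℕ) :: (rest.reverse.map neg3)))
      (((e :: rest) ++ ((0 : ℕ) :: (rest.reverse.map neg3))).length) = v0 := by
  unfold exPos
  rw [List.take_length, List.foldl_append]
  rw [exStep_undo G hwf h3 rest e (v0, 0) (by norm_num)]

end Undo


section Reduction

lemma visits_min {z T : ℕ} (σ : Fin T → Fin 3)
    (hgood : ∀ s : ℕ, s < z → ∀ f : Fin s → Fin 3 → Option (Fin s × Fin 3), ValidS f →
      ∀ u : Fin s, aRun f (some (u, 0)) (seqList σ) = none)
    {n : ℕ} (G : PGraph (Fin n)) (hwf : G.Wf) (hconn : G.Conn)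
    (h3 : ∀ v, G.deg v = 3) (v0 : Fin n) :
    min z n ≤ ((Finset.range (T+1)).image (fun j => exPos G v0 (seqList σ) j)).card := by
  by_contra hlt
  push_neg at hlt
  set w1 := seqList σ with hw1
  have hw1len : w1.length = T := seqList_length σ
  set S := (Finset.range (T+1)).image (fun j => exPos G v0 w1 j) with hS
  set s := S.card with hscard
  set st : ℕ → Fin n × ℕ := fun j => (w1.take j).foldl (exStep G) (v0, 0) with hst
  have hmem : ∀ j, j ≤ T → (st j).1 ∈ S := by
    intro j hj
    rw [hS]
    exact Finset.mem_image.2 ⟨j, Finset.mem_range.2 (by omega), rfl⟩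
  have hsn : s < n := lt_of_lt_of_le hlt (min_le_right _ _)
  have hsz : s < z := lt_of_lt_of_le hlt (min_le_left _ _)
  have hstep : ∀ j (hj : j < T),
      st (j+1) = exStep G (st j) (w1[j]'(by omega)) := by
    intro j hj
    rw [hst]
    simp only
    rw [List.take_succ, List.getElem?_eq_getElem (by omega), List.foldl_append]
    rfl
  have hback : ∀ j, j ≤ T → (st j).2 < 3 := by
    intro j
    induction j with
    | zero =>
      intro _
      show (0:ℕ) < 3
      norm_num
    | succ j ih =>
      intro hj
      rw [hstep j (by omega)]
      exact exStep_back_lt G hwf h3 _ _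
  set e : {x // x ∈ S} ≃ Fin s := S.equivFin with he
  set idx : (x : Fin n) → x ∈ S → Fin s := fun x h => e ⟨x, h⟩ with hidx
  set vl : Fin s → Fin n := fun a => (e.symm a).1 with hvl
  have hvl_mem : ∀ a, vl a ∈ S := fun a => (e.symm a).2
  have hvi : ∀ x h, vl (idx x h) = x := by
    intro x h
    rw [hvl, hidx]
    simp
  have hidcongr : ∀ (x y : Fin n) (hx : x ∈ S) (hy : y ∈ S), x = y → idx x hx = idx y hy := by
    intro x y hx hy h
    subst h
    rfl
  have hida : ∀ (x : Fin n) (hx' : x ∈ S) (a : Fin s), x = vl a → idx x hx' = a := by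
    intro x hx' a hxa
    rw [hidx]
    have hsub : (⟨x, hx'⟩ : {y // y ∈ S}) = e.symm a := Subtype.ext hxa
    show e ⟨x, hx'⟩ = a
    rw [hsub]
    exact e.apply_symm_apply a
  have hb3 : ∀ (x : Fin n) (p : ℕ), p < 3 → G.back x p < 3 := by
    intro x p hp
    have hplt : p < G.deg x := by rw [h3]; exact hp
    have h := hwf.2.1 x p hplt
    rw [h3] at h
    exact h
  set f : Fin s → Fin 3 → Option (Fin s × Fin 3) := fun a p =>
    if h : G.nbr (vl a) p.1 ∈ S then
      some (idx _ h, ⟨G.back (vl a) p.1, hb3 _ _ p.2⟩)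
    else none with hf
  have key : ∀ a b p, ((f a p).map Prod.fst = some b) ↔ G.nbr (vl a) p.1 = vl b := by
    intro a b p
    rw [hf]
    simp only
    by_cases h : G.nbr (vl a) p.1 ∈ S
    · rw [dif_pos h]
      simp only [Option.map_some, Option.some.injEq]
      constructor
      · rintro rfl
        exact (hvi _ h).symm
      · intro hh
        exact hida _ h b hh
    · rw [dif_neg h]
      simp only [Option.map_none]
      constructor
      · intro hc
        exact absurd hc (by simp)
      · intro hh
        exact absurd (hh ▸ hvl_mem b) h
  -- boundary vertex
  have hbdry : ∃ x, ∃ hx : x ∈ S, ∃ p : ℕ, p < 3 ∧ G.nbr x p ∉ S := by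
    by_contra hcl
    push_neg at hcl
    have hSne : ∃ y : Fin n, y ∉ S := by
      by_contra hall
      push_neg at hall
      have hsub2 : (Finset.univ : Finset (Fin n)) ⊆ S := fun y _ => hall y
      have := Finset.card_le_card hsub2
      rw [Finset.card_univ, Fintype.card_fin] at this
      omega
    obtain ⟨y, hy⟩ := hSne
    have hsub : ∀ b : Fin n,
        Relation.ReflTransGen (fun x y => ∃ i, i < G.deg x ∧ G.nbr x i = y) v0 b → b ∈ S := by
      intro b hb
      induction hb with
      | refl => exact hmem 0 (by omega)
      | tail hab hbc ih =>
        obtain ⟨i, hi, hnb⟩ := hbc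
        rw [← hnb]
        exact hcl _ ih i (by rw [h3] at hi; exact hi)
    exact hy (hsub y (hconn v0 y))
  obtain ⟨x, hx, p0, hp03, hout⟩ := hbdry
  -- symmetry
  have hBkey : ∀ a b, Bmat f a b
      = (Finset.univ.filter (fun p : Fin 3 => G.nbr (vl a) p.1 = vl b)).card := by
    intro a b
    unfold Bmat
    apply congrArg Finset.card
    apply Finset.filter_congr
    intro p _
    exact key a b p
  have hdeg3 : ∀ (y : Fin n) (i : ℕ), i < 3 → i < G.deg y := by
    intro y i hi
    rw [h3]
    exact hi
  have hsym : ∀ a b, Bmat f a b = Bmat f b a := by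
    intro a b
    rw [hBkey, hBkey]
    apply Finset.card_bij'
      (i := fun p hp => (⟨G.back (vl a) p.1, hb3 _ _ p.2⟩ : Fin 3))
      (j := fun q hq => (⟨G.back (vl b) q.1, hb3 _ _ q.2⟩ : Fin 3))
    · intro p hp
      rw [Finset.mem_filter] at hp ⊢
      refine ⟨Finset.mem_univ _, ?_⟩
      have hnb : G.nbr (vl a) p.1 = vl b := hp.2
      show G.nbr (vl b) (G.back (vl a) p.1) = vl a
      rw [← hnb]
      exact hwf.2.2.1 (vl a) p.1 (hdeg3 _ _ p.2)
    · intro q hq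
      rw [Finset.mem_filter] at hq ⊢
      refine ⟨Finset.mem_univ _, ?_⟩
      have hnb : G.nbr (vl b) q.1 = vl a := hq.2
      show G.nbr (vl a) (G.back (vl b) q.1) = vl b
      rw [← hnb]
      exact hwf.2.2.1 (vl b) q.1 (hdeg3 _ _ q.2)
    · intro p hp
      rw [Finset.mem_filter] at hp
      apply Fin.ext
      show G.back (vl b) (G.back (vl a) p.1) = p.1
      rw [← hp.2]
      exact hwf.2.2.2.1 (vl a) p.1 (hdeg3 _ _ p.2)
    · intro q hq
      rw [Finset.mem_filter] at hq
      apply Fin.ext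
      show G.back (vl a) (G.back (vl b) q.1) = q.1
      rw [← hq.2]
      exact hwf.2.2.2.1 (vl b) q.1 (hdeg3 _ _ q.2)
  have hloop : ∀ a, Bmat f a a = 0 := by
    intro a
    rw [hBkey, Finset.card_eq_zero]
    apply Finset.filter_eq_empty_iff.2
    intro p _
    exact hwf.2.2.2.2.1 (vl a) p.1 (hdeg3 _ _ p.2)
  -- consecutive adjacency
  have hport : ∀ j (hj : j < T),
      G.nbr (st j).1 (((st j).2 + w1[j]'(by omega)) % 3) = (st (j+1)).1
      ∧ G.back (st j).1 (((st j).2 + w1[j]'(by omega)) % 3) = (st (j+1)).2 := by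
    intro j hj
    rw [hstep j hj]
    unfold exStep
    simp only
    rw [h3]
    exact ⟨rfl, rfl⟩
  have hadj_consec : ∀ j (hj : j < T),
      (idx (st j).1 (hmem j hj.le) ≠ idx (st (j+1)).1 (hmem (j+1) hj)
        ∧ 0 < Bmat f (idx (st j).1 (hmem j hj.le)) (idx (st (j+1)).1 (hmem (j+1) hj))) := by
    intro j hj
    have hne : (st j).1 ≠ (st (j+1)).1 := by
      rw [← (hport j hj).1]
      intro hcon
      exact hwf.2.2.2.2.1 (st j).1 _ (hdeg3 _ _ (Nat.mod_lt _ (by norm_num))) hcon.symm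
    constructor
    · intro hcon
      apply hne
      have := congrArg vl hcon
      rwa [hvi, hvi] at this
    · rw [hBkey, Finset.card_pos]
      refine ⟨⟨((st j).2 + w1[j]'(by omega)) % 3, Nat.mod_lt _ (by norm_num)⟩, ?_⟩
      rw [Finset.mem_filter]
      refine ⟨Finset.mem_univ _, ?_⟩
      show G.nbr (vl (idx (st j).1 _)) _ = vl (idx (st (j+1)).1 _)
      rw [hvi, hvi]
      exact (hport j hj).1
  have hreach0 : ∀ j (hj : j ≤ T),
      Relation.ReflTransGen (fun a b : Fin s => a ≠ b ∧ 0 < Bmat f a b)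
        (idx (st 0).1 (hmem 0 (by omega))) (idx (st j).1 (hmem j hj)) := by
    intro j
    induction j with
    | zero => intro _; exact Relation.ReflTransGen.refl
    | succ j ih =>
      intro hj
      exact Relation.ReflTransGen.tail (ih (by omega)) (hadj_consec j (by omega))
  have hadjsym : Symmetric (fun a b : Fin s => a ≠ b ∧ 0 < Bmat f a b) := by
    intro a b h
    refine ⟨h.1.symm, ?_⟩
    rw [hsym]
    exact h.2
  have hreachS : ∀ a : Fin s,
      Relation.ReflTransGen (fun a b : Fin s => a ≠ b ∧ 0 < Bmat f a b)
        (idx (st 0).1 (hmem 0 (by omega))) a := by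
    intro a
    have hmem' := hvl_mem a
    rw [hS, Finset.mem_image] at hmem'
    obtain ⟨j, hj, hja⟩ := hmem'
    rw [Finset.mem_range] at hj
    have h1 := hreach0 j (by omega)
    have h2 : idx (st j).1 (hmem j (by omega)) = a := hida _ _ _ hja
    rwa [h2] at h1
  have hu0p : f (idx x hx) ⟨p0, hp03⟩ = none := by
    rw [hf]
    simp only
    rw [dif_neg]
    rw [hvi]
    exact hout
  have hvalid : ValidS f := by
    refine ⟨hsym, hloop, idx x hx, ⟨⟨p0, hp03⟩, hu0p⟩, ?_⟩
    intro a
    have h1 := hreachS a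
    have h2 := hreachS (idx x hx)
    exact Relation.ReflTransGen.trans
      (@Std.Symm.symm _ _ (@Relation.ReflTransGen.stdSymm _ _ ⟨hadjsym⟩) _ _ h1) h2
  -- mirror
  have hmirror : ∀ j (hj : j ≤ T),
      aRun f (some (idx (st 0).1 (hmem 0 (by omega)), 0)) (w1.take j)
        = some (idx (st j).1 (hmem j hj), ⟨(st j).2, hback j hj⟩) := by
    intro j
    induction j with
    | zero =>
      intro _
      rw [List.take_zero, aRun_nil]
      refine congrArg some (Prod.ext rfl ?_)
      apply Fin.ext
      rfl
    | succ j ih =>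
      intro hj1
      have hj : j < T := by omega
      rw [List.take_succ, List.getElem?_eq_getElem (by omega), aRun_append, ih (by omega)]
      show aStep f _ _ = _
      unfold aStep aPort
      simp only
      rw [hf]
      simp only
      have hnbr : G.nbr (vl (idx (st j).1 (hmem j hj.le))) (((st j).2 + w1[j]'(by omega)) % 3)
          = (st (j+1)).1 := by
        rw [hvi]
        exact (hport j hj).1
      have hcond : G.nbr (vl (idx (st j).1 (hmem j hj.le)))
          (((st j).2 + w1[j]'(by omega)) % 3) ∈ S := by
        rw [hnbr]
        exact hmem (j+1) hj1
      rw [dif_pos hcond]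
      refine congrArg some (Prod.ext ?_ ?_)
      · exact hidcongr _ _ _ _ hnbr
      · apply Fin.ext
        show G.back (vl (idx (st j).1 (hmem j hj.le))) _ = (st (j+1)).2
        rw [hvi]
        exact (hport j hj).2
  have hbad := hmirror T (le_refl T)
  have htake : List.take T w1 = w1 := by
    rw [← hw1len]
    exact List.take_length (l := w1)
  rw [htake] at hbad
  have hnone := hgood s hsz f hvalid (idx (st 0).1 (hmem 0 (by omega)))
  rw [hnone] at hbad
  cases hbad

end Reduction


/-- There is a constant `C` such that for every `z` there is an
exploration sequence `w ∈ {0,1,2}*` of length at most `z ^ C` such that in every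
connected 3-regular graph `G` on `n` vertices, from every starting vertex, an
agent following `w` visits at least `min z n` distinct vertices and returns to
its starting vertex (the walk is closed). -/
theorem short_uxs_three_regular :
    ∃ C : ℕ, 0 < C ∧ ∀ z : ℕ, ∃ w : List ℕ,
      (∀ e ∈ w, e < 3) ∧ w.length ≤ z ^ C ∧
      ∀ (n : ℕ) (G : PGraph (Fin n)), 0 < n → G.Wf → G.Conn →
        (∀ v, G.deg v = 3) → ∀ v0 : Fin n,
          min z n ≤ ((Finset.range (w.length + 1)).image (fun j => exPos G v0 w j)).card ∧
          exPos G v0 w w.length = v0 := by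
  refine ⟨14, by norm_num, ?_⟩
  intro z
  by_cases hz : z ≤ 1
  · refine ⟨[], by simp, by simp, ?_⟩
    intro n G hn hwf hconn h3 v0
    constructor
    · have h1 : min z n ≤ 1 := le_trans (min_le_left _ _) hz
      refine le_trans h1 ?_
      exact Finset.card_pos.2 ⟨exPos G v0 [] 0, Finset.mem_image.2 ⟨0, by simp, rfl⟩⟩
    · rfl
  · push_neg at hz
    have hz2 : 2 ≤ z := hz
    have hz1 : 1 ≤ z := by omega
    set T := 12*z^3*(6*z^2+3*z+1) with hT
    obtain ⟨σ, hgood⟩ := exists_good_seq z T hz1 (numeric_bound z hz1)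
    set w1 := seqList σ with hw1
    have hlen : w1.length = T := seqList_length σ
    have hTpos : 0 < T := by
      rw [hT]
      have h1 : 1 ≤ z^3 := Nat.one_le_pow _ _ (by omega)
      positivity
    obtain ⟨a, rest, hcons⟩ : ∃ a rest, w1 = a :: rest := by
      cases hw : w1 with
      | nil => rw [hw] at hlen; simp at hlen; omega
      | cons a rest => exact ⟨a, rest, rfl⟩
    set w2 := (0:ℕ) :: (rest.reverse.map neg3) with hw2
    have hlen2 : w2.length = T := by
      rw [hw2]
      simp only [List.length_cons, List.length_map, List.length_reverse]
      have : w1.length = rest.length + 1 := by rw [hcons]; rfl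
      omega
    refine ⟨w1 ++ w2, ?_, ?_, ?_⟩
    · intro e he
      rcases List.mem_append.1 he with h | h
      · exact seqList_lt σ e h
      · rw [hw2] at h
        rcases List.mem_cons.1 h with h | h
        · omega
        · rw [List.mem_map] at h
          obtain ⟨b, -, rfl⟩ := h
          exact neg3_lt b
    · have hlw : (w1 ++ w2).length = 2*T := by
        rw [List.length_append, hlen, hlen2]
        omega
      rw [hlw]
      calc 2*T = 24*(z^3*(6*z^2+3*z+1)) := by rw [hT]; ring
        _ ≤ 24*(z^3*(10*z^2)) := by
            have h6 : 6*z^2+3*z+1 ≤ 10*z^2 := by nlinarith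
            exact Nat.mul_le_mul_left _ (Nat.mul_le_mul_left _ h6)
        _ = 240*z^5 := by ring
        _ ≤ z^9*z^5 := by
            have h240 : 240 ≤ z^9 := le_trans (by norm_num) (Nat.pow_le_pow_left hz2 9)
            exact Nat.mul_le_mul_right _ h240
        _ = z^14 := by ring
    · intro n G hn hwf hconn h3 v0
      constructor
      · have hmin := visits_min σ hgood G hwf hconn h3 v0
        refine le_trans hmin (Finset.card_le_card ?_)
        intro y hy
        rw [Finset.mem_image] at hy ⊢
        obtain ⟨j, hj, hjy⟩ := hy
        rw [Finset.mem_range] at hj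
        have hjT : j ≤ T := by omega
        refine ⟨j, Finset.mem_range.2 ?_, ?_⟩
        · rw [List.length_append, hlen, hlen2]
          omega
        · rw [← hjy]
          unfold exPos
          rw [List.take_append_of_le_length (by rw [hlen]; exact hjT)]
      · rw [hcons, hw2]
        exact closed_walk G hwf h3 v0 a rest
end
end

section
/- There is an absolute constant C such that for every z ∈ ℕ there exists a finite sequence w ∈ {−1,0,1}* of length at most z^C with the following properties for every connected graph G on n vertices and every starting vertex: (1) an agent following w in G visits at least min{z, n} distinct vertices; (2) following w yields a closed walk in G (the agent ends at its starting vertex). (In the paper, w is produced by a deterministic O(log z)-space algorithm.) -/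
noncomputable section
open scoped Classical

variable {V : Type}

/-- One step of an agent following an exploration sequence with integer offsets:
at the pair (current vertex, port of the edge back to the previous vertex) and
offset `e`, the agent leaves through the port `(lab + e) mod deg`. -/
def exStepZ (G : PGraph V) (c : V × ℕ) (e : ℤ) : V × ℕ :=
  let i := (((c.2 : ℤ) + e) % (G.deg c.1 : ℤ)).toNat
  (G.nbr c.1 i, G.back c.1 i)

/-- Position of an agent starting at `v0` after following the first `j` offsets
of the exploration sequence `w` (initially the back-port is `0`). -/
def exPosZ (G : PGraph V) (v0 : V) (w : List ℤ) (j : ℕ) : V :=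
  ((w.take j).foldl (exStepZ G) (v0, 0)).1

open Finset

set_option linter.unusedSectionVars false
set_option linter.unusedVariables false
set_option maxHeartbeats 1000000

namespace UXS

variable {S : Type} [Fintype S]

def av (σ : Fin 3 → Equiv.Perm S) (b : S) : ℕ → S → ℕ
  | 0, _ => 1
  | (k+1), d => ∑ e : Fin 3, if σ e d = b then 0 else av σ b k (σ e d)

def avs (σ : Fin 3 → Equiv.Perm S) (b : S) : ℕ → S → ℕ
  | 0, d => if d = b then 0 else 1
  | (k+1), d => if d = b then 0 else ∑ e : Fin 3, avs σ b k (σ e d)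

def fv (σ : Fin 3 → Equiv.Perm S) (b : S) : ℕ → S → S → ℕ
  | 0, d, c => if d = c then 1 else 0
  | (k+1), d, c => if d = b then 0 else ∑ e : Fin 3, fv σ b k (σ e d) c

def bav (σ : Fin 3 → Equiv.Perm S) (b : S) : ℕ → S → ℕ
  | 0, _ => 1
  | (k+1), c => ∑ e : Fin 3, if (σ e).symm c = b then 0 else bav σ b k ((σ e).symm c)

def qv (σ : Fin 3 → Equiv.Perm S) (b : S) : ℕ → S → S → ℕ
  | 0, d, d' => if d = b then 0 else if d' = d then 1 else 0
  | (k+1), d, d' => if d = b then 0 else ∑ e : Fin 3, qv σ b k (σ e d) d'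

variable (σ : Fin 3 → Equiv.Perm S) (b : S)

lemma avs_at_b (k : ℕ) : avs σ b k b = 0 := by
  cases k <;> simp [avs]

lemma av_le : ∀ (k : ℕ) (d : S), av σ b k d ≤ 3 ^ k := by
  intro k
  induction k with
  | zero => intro d; simp [av]
  | succ k ih =>
    intro d
    calc av σ b (k+1) d ≤ ∑ _e : Fin 3, 3 ^ k := by
          rw [av]
          refine Finset.sum_le_sum fun e _ => ?_
          split
          · exact Nat.zero_le _
          · exact ih _
      _ = 3 ^ (k+1) := by simp [pow_succ, mul_comm]

lemma avs_le_av : ∀ (k : ℕ) (d : S), avs σ b k d ≤ av σ b k d := by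
  intro k
  induction k with
  | zero => intro d; rw [avs, av]; split <;> simp
  | succ k ih =>
    intro d
    rw [avs, av]
    split
    · exact Nat.zero_le _
    · refine Finset.sum_le_sum fun e _ => ?_
      split
      · next h => rw [h, avs_at_b]
      · exact ih _

lemma avs_le (k : ℕ) (d : S) : avs σ b k d ≤ 3 ^ k :=
  (avs_le_av σ b k d).trans (av_le σ b k d)

/-- avoiding for `j+k` steps implies avoiding for the first `k` steps. -/
lemma av_prefix : ∀ (k j : ℕ) (d : S), av σ b (j + k) d ≤ 3 ^ j * av σ b k d := by
  intro k
  induction k with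
  | zero => intro j d; simpa [av] using av_le σ b j d
  | succ k ih =>
    intro j d
    have : j + (k+1) = (j + k) + 1 := by omega
    rw [this, av, av]
    rw [Finset.mul_sum]
    refine Finset.sum_le_sum fun e _ => ?_
    split
    · simp
    · exact ih j (σ e d)

lemma fv_succ_right : ∀ (k : ℕ) (d c : S),
    fv σ b (k+1) d c = ∑ e : Fin 3, if (σ e).symm c = b then 0 else fv σ b k d ((σ e).symm c) := by
  intro k
  induction k with
  | zero =>
    intro d c
    have hterm : ∀ e : Fin 3, (if (σ e).symm c = b then 0 else fv σ b 0 d ((σ e).symm c))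
        = if (σ e) d = c ∧ ¬ d = b then 1 else 0 := by
      intro e
      by_cases hb : (σ e).symm c = b
      · rw [if_pos hb]
        by_cases h1 : (σ e) d = c
        · have hd : d = b := by rw [← hb, ← h1]; simp
          simp [h1, hd]
        · simp [h1]
      · rw [if_neg hb]
        by_cases h1 : (σ e) d = c
        · have hd : d = (σ e).symm c := by rw [← h1]; simp
          have hdb : ¬ d = b := by rw [hd]; exact hb
          simp [fv, hd, h1, hdb, hb]
        · have hd : ¬ d = (σ e).symm c := fun h => h1 (by rw [h]; simp)
          simp [fv, hd, h1]
    rw [Finset.sum_congr rfl (fun e _ => hterm e)]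
    rw [fv]
    by_cases hdb : d = b
    · simp [hdb]
    · rw [if_neg hdb]
      refine Finset.sum_congr rfl fun e _ => ?_
      by_cases h1 : (σ e) d = c <;> simp [fv, h1, hdb]
  | succ k ih =>
    intro d c
    rw [fv]
    split
    · next h =>
      subst h
      symm
      refine Finset.sum_eq_zero fun e _ => ?_
      split
      · rfl
      · rw [fv, if_pos rfl]
    · next h =>
      calc (∑ e : Fin 3, fv σ b (k+1) (σ e d) c)
          = ∑ e : Fin 3, ∑ e' : Fin 3, if (σ e').symm c = b then 0 else fv σ b k (σ e d) ((σ e').symm c) := by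
            exact Finset.sum_congr rfl fun e _ => ih (σ e d) c
        _ = ∑ e' : Fin 3, ∑ e : Fin 3, if (σ e').symm c = b then 0 else fv σ b k (σ e d) ((σ e').symm c) := by
            exact Finset.sum_comm
        _ = ∑ e' : Fin 3, if (σ e').symm c = b then 0 else fv σ b (k+1) d ((σ e').symm c) := by
            refine Finset.sum_congr rfl fun e' _ => ?_
            split
            · simp
            · rw [fv, if_neg h]

lemma sum_fv : ∀ (k : ℕ) (c : S), ∑ d : S, fv σ b k d c = bav σ b k c := by
  intro k
  induction k with
  | zero =>
    intro c
    simp [bav, fv]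
  | succ k ih =>
    intro c
    calc (∑ d : S, fv σ b (k+1) d c)
        = ∑ d : S, ∑ e : Fin 3, if (σ e).symm c = b then 0 else fv σ b k d ((σ e).symm c) := by
          exact Finset.sum_congr rfl fun d _ => fv_succ_right σ b k d c
      _ = ∑ e : Fin 3, ∑ d : S, if (σ e).symm c = b then 0 else fv σ b k d ((σ e).symm c) :=
          Finset.sum_comm
      _ = ∑ e : Fin 3, if (σ e).symm c = b then 0 else bav σ b k ((σ e).symm c) := by
          refine Finset.sum_congr rfl fun e _ => ?_
          split
          · simp
          · exact ih _
      _ = bav σ b (k+1) c := by rw [bav]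


lemma beta : ∀ (L : ℕ) (d : S),
    (∑ k ∈ Finset.range (L+1), fv σ b k d b * 3 ^ (L - k)) + avs σ b L d = 3 ^ L := by
  intro L
  induction L with
  | zero =>
    intro d
    by_cases h : d = b <;> simp [fv, avs, h]
  | succ L ih =>
    intro d
    by_cases h : d = b
    · rw [h]
      rw [avs_at_b, Finset.sum_range_succ']
      have h1 : ∀ k ∈ Finset.range (L+1), fv σ b (k+1) b b * 3 ^ (L + 1 - (k+1)) = 0 := by
        intro k _
        rw [fv, if_pos rfl]
        simp
      rw [Finset.sum_congr rfl h1]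
      simp [fv]
    · rw [Finset.sum_range_succ']
      have h0 : fv σ b 0 d b * 3 ^ (L+1-0) = 0 := by simp [fv, h]
      rw [h0, add_zero]
      have h1 : ∀ k, fv σ b (k+1) d b * 3 ^ (L + 1 - (k+1))
          = ∑ e : Fin 3, fv σ b k (σ e d) b * 3 ^ (L - k) := by
        intro k
        rw [fv, if_neg h, Nat.succ_sub_succ, Finset.sum_mul]
      rw [Finset.sum_congr rfl (fun k _ => h1 k)]
      rw [Finset.sum_comm]
      have h2 : avs σ b (L+1) d = ∑ e : Fin 3, avs σ b L (σ e d) := by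
        rw [avs, if_neg h]
      rw [h2, ← Finset.sum_add_distrib]
      rw [Finset.sum_congr rfl (fun e _ => ih (σ e d))]
      simp [pow_succ, mul_comm]

lemma bav_mono : ∀ (k : ℕ) (c : S), bav σ b (k+1) c ≤ 3 * bav σ b k c := by
  intro k
  induction k with
  | zero =>
    intro c
    rw [bav]
    calc (∑ e : Fin 3, if (σ e).symm c = b then 0 else bav σ b 0 ((σ e).symm c))
        ≤ ∑ _e : Fin 3, 1 := Finset.sum_le_sum fun e _ => by split <;> simp [bav]
      _ = 3 * bav σ b 0 c := by simp [bav]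
  | succ k ih =>
    intro c
    rw [show bav σ b (k+1+1) c = ∑ e : Fin 3, if (σ e).symm c = b then 0
        else bav σ b (k+1) ((σ e).symm c) from by rw [bav]]
    rw [show bav σ b (k+1) c = ∑ e : Fin 3, if (σ e).symm c = b then 0
        else bav σ b k ((σ e).symm c) from by rw [bav]]
    rw [Finset.mul_sum]
    refine Finset.sum_le_sum fun e _ => ?_
    split
    · simp
    · exact ih _

lemma bav_le_pow_mul : ∀ (j k : ℕ) (c : S), bav σ b (k + j) c ≤ 3 ^ j * bav σ b k c := by
  intro j
  induction j with
  | zero => intro k c; simp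
  | succ j ih =>
    intro k c
    have : k + (j+1) = (k + j) + 1 := by omega
    rw [this]
    calc bav σ b ((k+j)+1) c ≤ 3 * bav σ b (k+j) c := bav_mono σ b _ c
      _ ≤ 3 * (3 ^ j * bav σ b k c) := Nat.mul_le_mul_left _ (ih k c)
      _ = 3 ^ (j+1) * bav σ b k c := by ring

lemma kac_bav (L : ℕ) : (L+1) * bav σ b L b ≤ Fintype.card S * 3 ^ L := by
  have hsum : (∑ k ∈ Finset.range (L+1), bav σ b k b * 3 ^ (L - k)) ≤ Fintype.card S * 3 ^ L := by
    have := Finset.sum_congr rfl (fun d (_ : d ∈ (Finset.univ : Finset S)) => beta σ b L d)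
    have h2 : ∑ d : S, ((∑ k ∈ Finset.range (L+1), fv σ b k d b * 3 ^ (L - k)) + avs σ b L d)
        = Fintype.card S * 3 ^ L := by
      rw [this]
      simp [Finset.card_univ, mul_comm]
    rw [Finset.sum_add_distrib] at h2
    have h3 : ∑ d : S, ∑ k ∈ Finset.range (L+1), fv σ b k d b * 3 ^ (L - k)
        = ∑ k ∈ Finset.range (L+1), bav σ b k b * 3 ^ (L - k) := by
      rw [Finset.sum_comm]
      refine Finset.sum_congr rfl fun k _ => ?_
      rw [← Finset.sum_mul, sum_fv]
    omega
  calc (L+1) * bav σ b L b = ∑ _k ∈ Finset.range (L+1), bav σ b L b := by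
        simp [mul_comm]
    _ ≤ ∑ k ∈ Finset.range (L+1), bav σ b k b * 3 ^ (L - k) := by
        refine Finset.sum_le_sum fun k hk => ?_
        have hk' : k ≤ L := by simp at hk; omega
        have : bav σ b L b ≤ 3 ^ (L - k) * bav σ b k b := by
          have h5 : k + (L - k) = L := by omega
          have := bav_le_pow_mul σ b (L - k) k b
          rwa [h5] at this
        exact this.trans_eq (mul_comm _ _)
    _ ≤ Fintype.card S * 3 ^ L := hsum

lemma av_eq_bav_symm : ∀ (k : ℕ) (d : S), av σ b k d = bav (fun e => (σ e).symm) b k d := by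
  intro k
  induction k with
  | zero => intro d; rw [av, bav]
  | succ k ih =>
    intro d
    rw [av, bav]
    refine Finset.sum_congr rfl fun e _ => ?_
    simp only [Equiv.symm_symm]
    split
    · rfl
    · exact ih _

lemma kac_av (L : ℕ) : (L+1) * av σ b L b ≤ Fintype.card S * 3 ^ L := by
  rw [av_eq_bav_symm]
  exact kac_bav _ b L

lemma fv_sum_le (s : S) (L : ℕ) (d : S) :
    (∑ k ∈ Finset.range (L+1), fv σ s k d s * 3 ^ (L - k)) ≤ 3 ^ L := by
  have := beta σ s L d
  omega

lemma decomp (s : S) : ∀ (L₁ : ℕ) (L₂ : ℕ) (d : S),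
    av σ b (L₁ + L₂) d ≤ avs σ s L₁ d * 3 ^ L₂ +
      (∑ k ∈ Finset.range (L₁+1), fv σ s k d s * 3 ^ (L₁ - k)) * av σ b L₂ s := by
  intro L₁
  induction L₁ with
  | zero =>
    intro L₂ d
    by_cases h : d = s
    · rw [h]
      have h1 : (∑ k ∈ Finset.range 1, fv σ s k s s * 3 ^ (0 - k)) = 1 := by
        simp [fv]
      rw [h1, Nat.zero_add, one_mul]
      exact Nat.le_add_left _ _
    · have h1 : avs σ s 0 d = 1 := by rw [avs, if_neg h]
      rw [h1, one_mul, Nat.zero_add]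
      exact le_trans (av_le σ b L₂ d) (Nat.le_add_right _ _)
  | succ L₁ ih =>
    intro L₂ d
    by_cases h : d = s
    · rw [h]
      have h1 := av_prefix σ b L₂ (L₁+1) s
      have h2 : 3 ^ (L₁+1) ≤ ∑ k ∈ Finset.range (L₁+2), fv σ s k s s * 3 ^ (L₁ + 1 - k) := by
        have h3 : (0 : ℕ) ∈ Finset.range (L₁+2) := by simp
        have h4 := Finset.single_le_sum
          (f := fun k => fv σ s k s s * 3 ^ (L₁ + 1 - k))
          (fun k _ => Nat.zero_le _) h3
        simpa [fv] using h4
      calc av σ b (L₁ + 1 + L₂) s ≤ 3 ^ (L₁+1) * av σ b L₂ s := h1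
        _ ≤ (∑ k ∈ Finset.range (L₁+1+1), fv σ s k s s * 3 ^ (L₁ + 1 - k)) * av σ b L₂ s :=
            Nat.mul_le_mul_right _ h2
        _ ≤ _ := Nat.le_add_left _ _
    · have hstep : av σ b (L₁ + 1 + L₂) d = ∑ e : Fin 3,
          if σ e d = b then 0 else av σ b (L₁ + L₂) (σ e d) := by
        rw [show L₁ + 1 + L₂ = (L₁ + L₂) + 1 by omega, av]
      have hle1 : av σ b (L₁ + 1 + L₂) d ≤ ∑ e : Fin 3, av σ b (L₁ + L₂) (σ e d) := by
        rw [hstep]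
        refine Finset.sum_le_sum fun e _ => ?_
        split
        · exact Nat.zero_le _
        · exact le_rfl
      have hle2 : (∑ e : Fin 3, av σ b (L₁ + L₂) (σ e d)) ≤
          ∑ e : Fin 3, (avs σ s L₁ (σ e d) * 3 ^ L₂ +
            (∑ k ∈ Finset.range (L₁+1), fv σ s k (σ e d) s * 3 ^ (L₁ - k)) * av σ b L₂ s) :=
        Finset.sum_le_sum fun e _ => ih L₂ (σ e d)
      have havs : (∑ e : Fin 3, avs σ s L₁ (σ e d)) = avs σ s (L₁+1) d := by
        rw [avs, if_neg h]
      have hfv : (∑ e : Fin 3, ∑ k ∈ Finset.range (L₁+1), fv σ s k (σ e d) s * 3 ^ (L₁ - k))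
          = ∑ k ∈ Finset.range (L₁+1+1), fv σ s k d s * 3 ^ (L₁ + 1 - k) := by
        rw [Finset.sum_comm]
        rw [Finset.sum_range_succ' (fun k => fv σ s k d s * 3 ^ (L₁ + 1 - k)) (L₁+1)]
        have hz : fv σ s 0 d s * 3 ^ (L₁ + 1 - 0) = 0 := by simp [fv, h]
        rw [hz, add_zero]
        refine Finset.sum_congr rfl fun k hk => ?_
        rw [Nat.succ_sub_succ]
        rw [show fv σ s (k+1) d s = ∑ e : Fin 3, fv σ s k (σ e d) s from by rw [fv, if_neg h]]
        rw [Finset.sum_mul]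
      calc av σ b (L₁ + 1 + L₂) d ≤ _ := hle1
        _ ≤ _ := hle2
        _ = (∑ e : Fin 3, avs σ s L₁ (σ e d)) * 3 ^ L₂ +
            (∑ e : Fin 3, ∑ k ∈ Finset.range (L₁+1), fv σ s k (σ e d) s * 3 ^ (L₁ - k)) *
              av σ b L₂ s := by
          rw [Finset.sum_add_distrib, Finset.sum_mul, Finset.sum_mul]
        _ = _ := by rw [havs, hfv]

lemma decomp' (s : S) (L₁ L₂ : ℕ) (d : S) :
    av σ b (L₁ + L₂) d ≤ avs σ s L₁ d * 3 ^ L₂ + 3 ^ L₁ * av σ b L₂ s := by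
  refine (decomp σ b s L₁ L₂ d).trans ?_
  have := fv_sum_le σ s L₁ d
  exact Nat.add_le_add_left (Nat.mul_le_mul_right _ this) _

lemma hop (x : S) (e : Fin 3) (hne : σ e x ≠ x) (L : ℕ) :
    (L + 2) * av σ x L (σ e x) ≤ Fintype.card S * 3 ^ (L+1) := by
  have h1 : av σ x L (σ e x) ≤ av σ x (L+1) x := by
    rw [av]
    have h3 : (e : Fin 3) ∈ Finset.univ := Finset.mem_univ e
    have h4 := Finset.single_le_sum
      (f := fun e' => if σ e' x = x then 0 else av σ x L (σ e' x))
      (fun e' _ => Nat.zero_le _) h3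
    rwa [if_neg hne] at h4
  calc (L+2) * av σ x L (σ e x) ≤ (L+2) * av σ x (L+1) x := Nat.mul_le_mul_left _ h1
    _ = ((L+1)+1) * av σ x (L+1) x := by ring_nf
    _ ≤ Fintype.card S * 3 ^ (L+1) := kac_av σ x (L+1)

/-- chain with consecutive-distinct states. -/
def IsChain (σ : Fin 3 → Equiv.Perm S) (x y : S) (m : ℕ) (s : ℕ → S) : Prop :=
  s 0 = x ∧ s m = y ∧ ∀ i < m, (∃ e, σ e (s i) = s (i+1)) ∧ s (i+1) ≠ s i

lemma multihop (L : ℕ) : ∀ (ρ : ℕ) (d : S) (s : ℕ → S), 1 ≤ ρ →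
    IsChain σ b d ρ s →
    (L + 2) * av σ b (ρ * L) d ≤ 3 * ρ * Fintype.card S * 3 ^ (ρ * L) := by
  intro ρ
  induction ρ with
  | zero => intro d s h; omega
  | succ ρ ih =>
    intro d s _ hch
    obtain ⟨h0, hm, hstep⟩ := hch
    rcases Nat.eq_zero_or_pos ρ with hρ0 | hρpos
    · subst hρ0
      obtain ⟨⟨e, he⟩, hne⟩ := hstep 0 (by omega)
      rw [h0] at he hne
      have hd : σ e b ≠ b := by rw [he]; rw [hm] at hne ⊢; exact hne
      have hh := hop σ b e hd L
      rw [he, hm] at hh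
      show (L+2) * av σ b (1 * L) d ≤ 3 * 1 * Fintype.card S * 3 ^ (1 * L)
      calc (L+2) * av σ b (1*L) d = (L+2) * av σ b L d := by rw [one_mul]
        _ ≤ Fintype.card S * 3 ^ (L+1) := hh
        _ = 3 * 1 * Fintype.card S * 3 ^ (1 * L) := by rw [pow_succ, one_mul]; ring
    · -- ρ ≥ 1
      have hchain' : IsChain σ b (s ρ) ρ s := ⟨h0, rfl, fun i hi => hstep i (by omega)⟩
      have hih := ih (s ρ) s hρpos hchain'
      obtain ⟨⟨e, he⟩, hne⟩ := hstep ρ (by omega)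
      have hhop : (L + 2) * avs σ (s ρ) L d ≤ Fintype.card S * 3 ^ (L+1) := by
        have h2 : avs σ (s ρ) L d ≤ av σ (s ρ) L (σ e (s ρ)) := by
          rw [he, hm]
          exact avs_le_av σ (s ρ) L d
        refine le_trans (Nat.mul_le_mul_left _ h2) ?_
        exact hop σ (s ρ) e (by rw [he]; rw [hm] at hne ⊢; exact hne) L
      have hdec := decomp' σ b (s ρ) L (ρ * L) d
      have hmul : (ρ + 1) * L = L + ρ * L := by ring
      rw [hmul]
      calc (L+2) * av σ b (L + ρ * L) d
          ≤ (L+2) * (avs σ (s ρ) L d * 3 ^ (ρ * L) + 3 ^ L * av σ b (ρ * L) (s ρ)) :=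
            Nat.mul_le_mul_left _ hdec
        _ = ((L+2) * avs σ (s ρ) L d) * 3 ^ (ρ * L) + 3 ^ L * ((L+2) * av σ b (ρ * L) (s ρ)) := by
            ring
        _ ≤ (Fintype.card S * 3 ^ (L+1)) * 3 ^ (ρ * L) + 3 ^ L * (3 * ρ * Fintype.card S * 3 ^ (ρ * L)) := by
            have := Nat.mul_le_mul_right (3 ^ (ρ * L)) hhop
            have := Nat.mul_le_mul_left (3 ^ L) hih
            omega
        _ = 3 * (ρ + 1) * Fintype.card S * 3 ^ (L + ρ * L) := by
            rw [pow_add, pow_succ]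
            ring
lemma window (d : S) (ρ : ℕ) (s : ℕ → S) (hρ1 : 1 ≤ ρ) (hρ2 : ρ ≤ Fintype.card S)
    (hch : IsChain σ b d ρ s) :
    8 * av σ b (Fintype.card S * (24 * Fintype.card S ^ 2)) d
      ≤ 3 ^ (Fintype.card S * (24 * Fintype.card S ^ 2)) := by
  set N := Fintype.card S with hN
  set L := 24 * N ^ 2 with hL
  set W := N * L with hW
  have hmh := multihop σ b L ρ d s hρ1 hch
  have hcoef : 8 * (3 * ρ * N) ≤ L + 2 := by
    have e1 : 8 * (3 * ρ * N) = 24 * (ρ * N) := by ring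
    have e2 : 24 * (ρ * N) ≤ 24 * (N * N) :=
      Nat.mul_le_mul_left _ (Nat.mul_le_mul_right _ hρ2)
    have e3 : 24 * (N * N) = L := by rw [hL]; ring
    omega
  have h1 : (L + 2) * (8 * av σ b (ρ * L) d) ≤ (L + 2) * 3 ^ (ρ * L) := by
    calc (L + 2) * (8 * av σ b (ρ * L) d) = 8 * ((L + 2) * av σ b (ρ * L) d) := by ring
      _ ≤ 8 * (3 * ρ * N * 3 ^ (ρ * L)) := Nat.mul_le_mul_left _ hmh
      _ = (8 * (3 * ρ * N)) * 3 ^ (ρ * L) := by ring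
      _ ≤ (L + 2) * 3 ^ (ρ * L) := Nat.mul_le_mul_right _ hcoef
  have h2 : 8 * av σ b (ρ * L) d ≤ 3 ^ (ρ * L) :=
    Nat.le_of_mul_le_mul_left h1 (by omega)
  have hρL : ρ * L ≤ W := by
    rw [hW]
    exact Nat.mul_le_mul_right _ hρ2
  have h3 : av σ b W d ≤ 3 ^ (W - ρ * L) * av σ b (ρ * L) d := by
    have := av_prefix σ b (ρ * L) (W - ρ * L) d
    rwa [show W - ρ * L + ρ * L = W by omega] at this
  calc 8 * av σ b W d ≤ 3 ^ (W - ρ * L) * (8 * av σ b (ρ * L) d) := by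
        calc 8 * av σ b W d ≤ 8 * (3 ^ (W - ρ * L) * av σ b (ρ * L) d) :=
              Nat.mul_le_mul_left _ h3
          _ = 3 ^ (W - ρ * L) * (8 * av σ b (ρ * L) d) := by ring
    _ ≤ 3 ^ (W - ρ * L) * 3 ^ (ρ * L) := Nat.mul_le_mul_left _ h2
    _ = 3 ^ W := by rw [← pow_add]; congr 1; omega

def reaches (σ : Fin 3 → Equiv.Perm S) (x y : S) : Prop :=
  Relation.ReflTransGen (fun a c => ∃ e : Fin 3, σ e a = c) x y

lemma reaches_pow (e : Fin 3) : ∀ (k : ℕ) (x : S), reaches σ x (((σ e) ^ k) x) := by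
  intro k
  induction k with
  | zero =>
    intro x
    rw [pow_zero, show ((1 : Equiv.Perm S)) x = x from rfl]
    exact Relation.ReflTransGen.refl
  | succ k ih =>
    intro x
    have step : ((σ e) ^ (k+1)) x = σ e (((σ e) ^ k) x) := by
      rw [pow_succ']
      rfl
    rw [step]
    exact Relation.ReflTransGen.tail (ih x) ⟨e, rfl⟩

lemma reaches_back (e : Fin 3) (z : S) : reaches σ (σ e z) z := by
  have hm : 0 < orderOf (σ e) := orderOf_pos (σ e)
  have h := reaches_pow σ e (orderOf (σ e) - 1) (σ e z)
  have h2 : ((σ e) ^ (orderOf (σ e) - 1)) (σ e z) = z := by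
    have : ((σ e) ^ (orderOf (σ e) - 1)) (σ e z) = ((σ e) ^ (orderOf (σ e) - 1) * σ e) z := rfl
    rw [this, ← pow_succ, show orderOf (σ e) - 1 + 1 = orderOf (σ e) from by omega,
      pow_orderOf_eq_one]
    rfl
  rwa [h2] at h

lemma reaches_symm {x y : S} (h : reaches σ x y) : reaches σ y x := by
  induction h with
  | refl => exact Relation.ReflTransGen.refl
  | tail _ hstep ih =>
    obtain ⟨e, he⟩ := hstep
    refine Relation.ReflTransGen.trans ?_ ih
    rw [← he]
    exact reaches_back σ e _

def IsChainW (σ : Fin 3 → Equiv.Perm S) (x y : S) (m : ℕ) (s : ℕ → S) : Prop :=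
  s 0 = x ∧ s m = y ∧ ∀ i < m, ∃ e, σ e (s i) = s (i+1)

lemma reaches_chainW {x y : S} (h : reaches σ x y) : ∃ m s, IsChainW σ x y m s := by
  induction h with
  | refl => exact ⟨0, fun _ => x, rfl, rfl, by omega⟩
  | @tail w z _ hstep ih =>
    obtain ⟨m, s, h0, hm, hs⟩ := ih
    obtain ⟨e, he⟩ := hstep
    refine ⟨m + 1, fun i => if i ≤ m then s i else z, ?_, ?_, ?_⟩
    · show (if 0 ≤ m then s 0 else z) = x
      rw [if_pos (Nat.zero_le m)]
      exact h0
    · show (if m + 1 ≤ m then s (m+1) else z) = z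
      rw [if_neg (by omega : ¬ (m+1 ≤ m))]
    · intro i hi
      show ∃ e', σ e' (if i ≤ m then s i else z) = (if i + 1 ≤ m then s (i+1) else z)
      by_cases him : i + 1 ≤ m
      · rw [if_pos (by omega : i ≤ m), if_pos him]
        exact hs i (by omega)
      · have hi' : i = m := by omega
        rw [hi', if_pos (le_refl m), if_neg (by omega : ¬ (m+1 ≤ m)), hm]
        exact ⟨e, he⟩

lemma chainW_short : ∀ (m : ℕ) (x y : S) (s : ℕ → S), IsChainW σ x y m s →
    ∃ m' s', m' ≤ Fintype.card S ∧ IsChainW σ x y m' s' := by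
  intro m
  induction m using Nat.strong_induction_on with
  | _ m ih =>
    intro x y s hch
    by_cases hm : m ≤ Fintype.card S
    · exact ⟨m, s, hm, hch⟩
    · have hlt : Fintype.card S < Fintype.card (Fin (m+1)) := by
        simp; omega
      obtain ⟨a0, c0, hij, heq0⟩ :=
        Fintype.exists_ne_map_eq_of_card_lt (fun t : Fin (m+1) => s (t : ℕ)) hlt
      obtain ⟨h0, hmy, hs⟩ := hch
      have hcut : ∀ (i j : ℕ), j ≤ m → i < j → s i = s j →
          ∃ m' s', m' ≤ Fintype.card S ∧ IsChainW σ x y m' s' := by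
        intro i j hjm hij2 heq2
        refine ih (m - (j - i)) (by omega) x y
          (fun t => if t ≤ i then s t else s (t + (j - i))) ⟨?_, ?_, ?_⟩
        · show (if 0 ≤ i then s 0 else s (0 + (j - i))) = x
          rw [if_pos (Nat.zero_le i)]
          exact h0
        · show (if m - (j - i) ≤ i then s (m - (j - i)) else s (m - (j - i) + (j - i))) = y
          by_cases hc : m - (j - i) ≤ i
          · have hieq : m - (j - i) = i := by omega
            have hmj : m = j := by omega
            rw [if_pos hc, hieq, heq2, ← hmj]
            exact hmy
          · rw [if_neg hc, show m - (j - i) + (j - i) = m by omega]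
            exact hmy
        · intro t ht
          show ∃ e', σ e' (if t ≤ i then s t else s (t + (j - i)))
            = (if t + 1 ≤ i then s (t+1) else s (t + 1 + (j - i)))
          by_cases h1 : t + 1 ≤ i
          · rw [if_pos (by omega : t ≤ i), if_pos h1]
            exact hs t (by omega)
          · by_cases h2 : t ≤ i
            · have hti : t = i := by omega
              rw [if_pos h2, if_neg h1, hti, heq2, show i + 1 + (j - i) = j + 1 by omega]
              exact hs j (by omega)
            · rw [if_neg h2, if_neg h1, show t + 1 + (j - i) = (t + (j - i)) + 1 by omega]
              exact hs (t + (j - i)) (by omega)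
      rcases lt_or_gt_of_ne hij with hlt2 | hlt2
      · exact hcut a0 c0 (by omega) (by exact_mod_cast hlt2) heq0
      · exact hcut c0 a0 (by omega) (by exact_mod_cast hlt2) heq0.symm

lemma chainW_dedup : ∀ (m : ℕ) (x y : S) (s : ℕ → S), IsChainW σ x y m s →
    ∃ m' s', m' ≤ m ∧ IsChain σ x y m' s' := by
  intro m
  induction m using Nat.strong_induction_on with
  | _ m ih =>
    intro x y s hch
    obtain ⟨h0, hmy, hs⟩ := hch
    by_cases hall : ∀ i < m, s (i+1) ≠ s i
    · exact ⟨m, s, le_rfl, h0, hmy, fun i hi => ⟨hs i hi, hall i hi⟩⟩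
    · push_neg at hall
      obtain ⟨i, hi, heq⟩ := hall
      have hm1 : m - 1 < m := by omega
      have hch' : IsChainW σ x y (m - 1) (fun t => if t ≤ i then s t else s (t+1)) := by
        refine ⟨?_, ?_, ?_⟩
        · show (if 0 ≤ i then s 0 else s 1) = x
          rw [if_pos (Nat.zero_le i)]; exact h0
        · show (if m - 1 ≤ i then s (m-1) else s (m - 1 + 1)) = y
          by_cases hc : m - 1 ≤ i
          · have : i = m - 1 := by omega
            rw [if_pos hc, ← this, show s i = s (i+1) from heq.symm,
              show i + 1 = m from by omega]
            exact hmy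
          · rw [if_neg hc, show m - 1 + 1 = m from by omega]
            exact hmy
        · intro t ht
          show ∃ e', σ e' (if t ≤ i then s t else s (t+1))
              = (if t + 1 ≤ i then s (t+1) else s (t + 1 + 1))
          by_cases h1 : t + 1 ≤ i
          · rw [if_pos (by omega : t ≤ i), if_pos h1]
            exact hs t (by omega)
          · by_cases h2 : t ≤ i
            · have hti : t = i := by omega
              rw [if_pos h2, if_neg h1, hti, ← heq]
              exact hs (i+1) (by omega)
            · rw [if_neg h2, if_neg h1]
              exact hs (t+1) (by omega)
      obtain ⟨m', s', hle, hch2⟩ := ih (m-1) hm1 x y _ hch'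
      exact ⟨m', s', by omega, hch2⟩

lemma reaches_short_chain {x y : S} (hxy : x ≠ y) (h : reaches σ x y) :
    ∃ ρ s, 1 ≤ ρ ∧ ρ ≤ Fintype.card S ∧ IsChain σ x y ρ s := by
  obtain ⟨m, s, hch⟩ := reaches_chainW σ h
  obtain ⟨m1, s1, hm1, hch1⟩ := chainW_short σ m x y s hch
  obtain ⟨m2, s2, hm2, hch2⟩ := chainW_dedup σ m1 x y s1 hch1
  refine ⟨m2, s2, ?_, by omega, hch2⟩
  rcases Nat.eq_zero_or_pos m2 with h0 | h1
  · exfalso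
    obtain ⟨ha, hb, _⟩ := hch2
    rw [h0] at hb
    exact hxy (ha ▸ hb ▸ rfl)
  · exact h1

lemma sum_qv : ∀ (k : ℕ) (d : S), ∑ d' : S, qv σ b k d d' = avs σ b k d := by
  intro k
  induction k with
  | zero =>
    intro d
    by_cases h : d = b <;> simp [qv, avs, h]
  | succ k ih =>
    intro d
    by_cases h : d = b
    · simp [qv, avs, h]
    · rw [show avs σ b (k+1) d = ∑ e : Fin 3, avs σ b k (σ e d) from by rw [avs, if_neg h]]
      simp only [show ∀ d', qv σ b (k+1) d d' = ∑ e : Fin 3, qv σ b k (σ e d) d' from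
        fun d' => by rw [qv, if_neg h]]
      rw [Finset.sum_comm]
      exact Finset.sum_congr rfl fun e _ => ih (σ e d)

lemma qv_decomp : ∀ (j k : ℕ) (d : S),
    avs σ b (j + k) d = ∑ d' : S, qv σ b j d d' * avs σ b k d' := by
  intro j
  induction j with
  | zero =>
    intro k d
    by_cases h : d = b
    · rw [Nat.zero_add, h, avs_at_b]
      symm
      refine Finset.sum_eq_zero fun d' _ => ?_
      rw [qv, if_pos rfl, zero_mul]
    · rw [Nat.zero_add]
      simp only [show ∀ d', qv σ b 0 d d' = if d' = d then 1 else 0 from fun d' => by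
        rw [qv, if_neg h]]
      have hterm : ∀ d', (if d' = d then 1 else 0) * avs σ b k d'
          = if d' = d then avs σ b k d' else 0 := fun d' => by split <;> simp
      rw [Finset.sum_congr rfl fun d' _ => hterm d']
      rw [Finset.sum_ite_eq' Finset.univ d (fun d' => avs σ b k d')]
      simp
  | succ j ih =>
    intro k d
    by_cases h : d = b
    · rw [show j + 1 + k = (j + k) + 1 from by omega, h]
      rw [avs_at_b]
      symm
      refine Finset.sum_eq_zero fun d' _ => ?_
      rw [qv, if_pos rfl, zero_mul]
    · rw [show j + 1 + k = (j + k) + 1 from by omega]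
      rw [show avs σ b ((j+k)+1) d = ∑ e : Fin 3, avs σ b (j+k) (σ e d) from by
        rw [avs, if_neg h]]
      rw [Finset.sum_congr rfl fun e _ => ih k (σ e d)]
      rw [Finset.sum_comm]
      refine Finset.sum_congr rfl fun d' _ => ?_
      rw [show qv σ b (j+1) d d' = ∑ e : Fin 3, qv σ b j (σ e d) d' from by
        rw [qv, if_neg h]]
      rw [Finset.sum_mul]

lemma qv_pos_reaches : ∀ (k : ℕ) (d d' : S), qv σ b k d d' ≠ 0 → reaches σ d d' := by
  intro k
  induction k with
  | zero =>
    intro d d' h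
    rw [qv] at h
    by_cases h1 : d = b
    · rw [if_pos h1] at h; exact absurd rfl h
    · rw [if_neg h1] at h
      by_cases h2 : d' = d
      · rw [h2]; exact Relation.ReflTransGen.refl
      · rw [if_neg h2] at h; exact absurd rfl h
  | succ k ih =>
    intro d d' h
    rw [qv] at h
    by_cases h1 : d = b
    · rw [if_pos h1] at h; exact absurd rfl h
    · rw [if_neg h1] at h
      obtain ⟨e, _, he⟩ := Finset.exists_ne_zero_of_sum_ne_zero h
      exact Relation.ReflTransGen.head ⟨e, rfl⟩ (ih (σ e d) d' he)

lemma submult (d0 : S) (hreach : reaches σ d0 b) (K : ℕ) :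
    8 ^ K * avs σ b (K * (Fintype.card S * (24 * Fintype.card S ^ 2))) d0
      ≤ 3 ^ (K * (Fintype.card S * (24 * Fintype.card S ^ 2))) := by
  set W := Fintype.card S * (24 * Fintype.card S ^ 2) with hW
  have hwin : ∀ d', reaches σ d0 d' → d' ≠ b → 8 * av σ b W d' ≤ 3 ^ W := by
    intro d' hd' hdb
    have hb0 : reaches σ b d0 := reaches_symm σ hreach
    have hbd' : reaches σ b d' := hb0.trans hd'
    obtain ⟨ρ, s, h1, h2, hch⟩ := reaches_short_chain σ (Ne.symm hdb) hbd'
    exact window σ b d' ρ s h1 h2 hch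
  induction K with
  | zero =>
    rw [Nat.zero_mul, pow_zero, pow_zero, one_mul]
    rw [avs]
    split <;> omega
  | succ K ih =>
    have hsplit : (K+1) * W = K * W + W := by ring
    rw [hsplit, qv_decomp σ b (K*W) W d0]
    calc 8 ^ (K+1) * ∑ d' : S, qv σ b (K*W) d0 d' * avs σ b W d'
        = ∑ d' : S, 8 ^ K * (qv σ b (K*W) d0 d' * (8 * avs σ b W d')) := by
          rw [Finset.mul_sum]
          exact Finset.sum_congr rfl fun d' _ => by ring
      _ ≤ ∑ d' : S, 8 ^ K * (qv σ b (K*W) d0 d' * 3 ^ W) := by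
          refine Finset.sum_le_sum fun d' _ => ?_
          refine Nat.mul_le_mul_left _ ?_
          by_cases hq : qv σ b (K*W) d0 d' = 0
          · rw [hq, zero_mul, zero_mul]
          · refine Nat.mul_le_mul_left _ ?_
            by_cases hdb : d' = b
            · rw [hdb, avs_at_b]; exact Nat.zero_le _
            · calc 8 * avs σ b W d' ≤ 8 * av σ b W d' :=
                    Nat.mul_le_mul_left _ (avs_le_av σ b W d')
                _ ≤ 3 ^ W := hwin d' (qv_pos_reaches σ b (K*W) d0 d' hq) hdb
      _ = (8 ^ K * avs σ b (K*W) d0) * 3 ^ W := by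
          rw [← Finset.mul_sum, ← Finset.sum_mul, sum_qv]
          ring
      _ ≤ 3 ^ (K*W) * 3 ^ W := Nat.mul_le_mul_right _ ih
      _ = 3 ^ (K*W + W) := by rw [pow_add]

def Vis (σ : Fin 3 → Equiv.Perm S) (b : S) : S → List (Fin 3) → Prop
  | d, [] => d = b
  | d, (e :: f) => d = b ∨ Vis σ b (σ e d) f

lemma extraction {I : Type} [Fintype I] (Ss : I → Type) [∀ i, Fintype (Ss i)]
    (σs : ∀ i, Fin 3 → Equiv.Perm (Ss i)) (bs : ∀ i, Ss i) :
    ∀ (k : ℕ) (ds : ∀ i, Ss i),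
      (∑ i : I, avs (σs i) (bs i) k (ds i)) < 3 ^ k →
      ∃ f : List (Fin 3), f.length = k ∧ ∀ i, Vis (σs i) (bs i) (ds i) f := by
  intro k
  induction k with
  | zero =>
    intro ds hsum
    refine ⟨[], rfl, fun i => ?_⟩
    have hz : avs (σs i) (bs i) 0 (ds i) = 0 := by
      have := Finset.single_le_sum
        (f := fun i => avs (σs i) (bs i) 0 (ds i)) (fun i _ => Nat.zero_le _)
        (Finset.mem_univ i)
      omega
    rw [avs] at hz
    by_cases h : ds i = bs i
    · exact h
    · rw [if_neg h] at hz; omega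
  | succ k ih =>
    intro ds hsum
    set ds' : Fin 3 → ∀ i, Ss i :=
      fun e i => if ds i = bs i then bs i else σs i e (ds i) with hds'
    have hswap : (∑ e : Fin 3, ∑ i : I, avs (σs i) (bs i) k (ds' e i))
        = ∑ i : I, avs (σs i) (bs i) (k+1) (ds i) := by
      rw [Finset.sum_comm]
      refine Finset.sum_congr rfl fun i _ => ?_
      by_cases h : ds i = bs i
      · rw [show avs (σs i) (bs i) (k+1) (ds i) = 0 from by rw [h, avs_at_b]]
        refine Finset.sum_eq_zero fun e _ => ?_
        rw [hds']
        simp only [if_pos h]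
        exact avs_at_b _ _ _
      · rw [show avs (σs i) (bs i) (k+1) (ds i)
            = ∑ e : Fin 3, avs (σs i) (bs i) k (σs i e (ds i)) from by rw [avs, if_neg h]]
        refine Finset.sum_congr rfl fun e _ => ?_
        rw [hds']
        simp only [if_neg h]
    have hex : ∃ e : Fin 3, (∑ i : I, avs (σs i) (bs i) k (ds' e i)) < 3 ^ k := by
      by_contra hc
      push_neg at hc
      have : (3 : ℕ) * 3 ^ k ≤ ∑ e : Fin 3, ∑ i : I, avs (σs i) (bs i) k (ds' e i) := by
        calc (3 : ℕ) * 3 ^ k = ∑ _e : Fin 3, 3 ^ k := by simp [mul_comm]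
          _ ≤ _ := Finset.sum_le_sum fun e _ => hc e
      rw [hswap] at this
      rw [show (3:ℕ)^(k+1) = 3 * 3 ^ k from by ring] at hsum
      omega
    obtain ⟨e, he⟩ := hex
    obtain ⟨f, hf, hvis⟩ := ih (ds' e) he
    refine ⟨e :: f, by simp [hf], fun i => ?_⟩
    by_cases h : ds i = bs i
    · exact Or.inl h
    · refine Or.inr ?_
      have := hvis i
      rw [hds'] at this
      simpa [if_neg h] using this

end UXS

lemma completion {T : Type} [Fintype T] [DecidableEq T] (D A : Finset T) (g : T → T)
    (hAD : A ⊆ D) (hgD : ∀ a ∈ A, g a ∈ D) (hinj : Set.InjOn g A)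
    (hcard : 2 * D.card ≤ Fintype.card T) :
    ∃ π : Equiv.Perm T, (∀ a ∈ A, π a = g a) ∧ (∀ x ∈ D, x ∉ A → π x ∉ D) := by
  classical
  set S₁ : Finset T := D \ A with hS₁
  set S₂ : Finset T := Finset.univ \ D with hS₂
  have hAcard : A.card ≤ D.card := Finset.card_le_card hAD
  have hDcard : D.card ≤ Fintype.card T := by
    have := Finset.card_le_card (Finset.subset_univ D)
    simpa using this
  have hS1card : S₁.card = D.card - A.card := Finset.card_sdiff_of_subset hAD
  have hS2card : S₂.card = Fintype.card T - D.card := by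
    rw [hS₂, Finset.card_sdiff_of_subset (Finset.subset_univ D), Finset.card_univ]
  have h1 : S₁.card ≤ S₂.card := by omega
  obtain ⟨U, hUsub, hUcard⟩ : ∃ U ⊆ S₂, U.card = S₁.card :=
    Finset.exists_subset_card_eq (by omega)
  set TA : Finset T := A.image g with hTA
  have hTAcard : TA.card = A.card := Finset.card_image_of_injOn hinj
  have hTAD : TA ⊆ D := by
    intro x hx
    rw [hTA] at hx
    obtain ⟨a, ha, rfl⟩ := Finset.mem_image.mp hx
    exact hgD a ha
  set R : Finset T := Finset.univ \ (TA ∪ U) with hR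
  have hdisj : Disjoint TA U := by
    refine Finset.disjoint_left.mpr fun x hx hxU => ?_
    have h2 := hUsub hxU
    rw [hS₂, Finset.mem_sdiff] at h2
    exact h2.2 (hTAD hx)
  have hRcard : R.card = S₂.card := by
    rw [hR, Finset.card_sdiff_of_subset (Finset.subset_univ _), Finset.card_univ,
      Finset.card_union_of_disjoint hdisj, hTAcard, hUcard]
    omega
  have e₁ : {x // x ∈ S₁} ≃ {x // x ∈ U} := Finset.equivOfCardEq (by rw [hUcard])
  have e₂ : {x // x ∈ S₂} ≃ {x // x ∈ R} := Finset.equivOfCardEq (by rw [hRcard])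
  set f : T → T := fun x =>
    if hx : x ∈ A then g x
    else if hx1 : x ∈ D then (e₁ ⟨x, by rw [hS₁, Finset.mem_sdiff]; exact ⟨hx1, hx⟩⟩ : T)
    else (e₂ ⟨x, by rw [hS₂, Finset.mem_sdiff]; exact ⟨Finset.mem_univ x, hx1⟩⟩ : T)
    with hf
  have hfA : ∀ x ∈ A, f x = g x := by
    intro x hx
    rw [hf]
    simp only [dif_pos hx]
  have hfS1 : ∀ x, (hx : x ∉ A) → (hx1 : x ∈ D) → f x ∈ U := by
    intro x hx hx1
    rw [hf]
    simp only [dif_neg hx, dif_pos hx1]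
    exact (e₁ _).2
  have hfS2 : ∀ x, (hx : x ∉ A) → (hx1 : x ∉ D) → f x ∈ R := by
    intro x hx hx1
    rw [hf]
    simp only [dif_neg hx, dif_neg hx1]
    exact (e₂ _).2
  have hUD : ∀ x ∈ U, x ∉ D := by
    intro x hx
    have := hUsub hx
    rw [hS₂, Finset.mem_sdiff] at this
    exact this.2
  have hRTA : ∀ x ∈ R, x ∉ TA ∧ x ∉ U := by
    intro x hx
    rw [hR, Finset.mem_sdiff, Finset.mem_union] at hx
    exact ⟨fun h => hx.2 (Or.inl h), fun h => hx.2 (Or.inr h)⟩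
  have hinjf : Function.Injective f := by
    intro x y hxy
    by_cases hxA : x ∈ A <;> by_cases hyA : y ∈ A
    · -- both in A
      rw [hfA x hxA, hfA y hyA] at hxy
      exact hinj hxA hyA hxy
    · by_cases hyD : y ∈ D
      · have h2 := hfS1 y hyA hyD
        rw [hfA x hxA] at hxy
        have : g x ∈ TA := Finset.mem_image_of_mem g hxA
        rw [hxy] at this
        exact absurd this (Finset.disjoint_left.mp hdisj · h2)
      · have h2 := hfS2 y hyA hyD
        rw [hfA x hxA] at hxy
        have : g x ∈ TA := Finset.mem_image_of_mem g hxA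
        rw [hxy] at this
        exact absurd this ((hRTA _ h2).1)
    · by_cases hxD : x ∈ D
      · have h2 := hfS1 x hxA hxD
        rw [hfA y hyA] at hxy
        have : g y ∈ TA := Finset.mem_image_of_mem g hyA
        rw [← hxy] at this
        exact absurd this (Finset.disjoint_left.mp hdisj · h2)
      · have h2 := hfS2 x hxA hxD
        rw [hfA y hyA] at hxy
        have : g y ∈ TA := Finset.mem_image_of_mem g hyA
        rw [← hxy] at this
        exact absurd this ((hRTA _ h2).1)
    · -- neither in A
      by_cases hxD : x ∈ D <;> by_cases hyD : y ∈ D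
      · -- both via e₁
        rw [hf] at hxy
        simp only [dif_neg hxA, dif_pos hxD, dif_neg hyA, dif_pos hyD] at hxy
        have := e₁.injective (Subtype.ext hxy)
        exact congrArg Subtype.val this
      · have h2 := hfS1 x hxA hxD
        have h3 := hfS2 y hyA hyD
        rw [hxy] at h2
        exact absurd h2 ((hRTA _ h3).2)
      · have h2 := hfS2 x hxA hxD
        have h3 := hfS1 y hyA hyD
        rw [hxy] at h2
        exact absurd h3 ((hRTA _ h2).2)
      · rw [hf] at hxy
        simp only [dif_neg hxA, dif_neg hxD, dif_neg hyA, dif_neg hyD] at hxy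
        have := e₂.injective (Subtype.ext hxy)
        exact congrArg Subtype.val this
  have hbij : Function.Bijective f := Finite.injective_iff_bijective.mp hinjf
  refine ⟨Equiv.ofBijective f hbij, ?_, ?_⟩
  · intro a ha
    show f a = g a
    exact hfA a ha
  · intro x hxD hxA
    show f x ∉ D
    have := hfS1 x hxA hxD
    exact hUD _ this

namespace UXSG

open UXS

variable {V : Type} (G : PGraph V)

def dvalid (s : V × ℕ) : Prop := s.2 < G.deg s.1

lemma port_lt (hwf : G.Wf) (s : V × ℕ) (hs : dvalid G s) (e : ℤ) :
    ((((s.2 : ℤ)) + e) % (G.deg s.1 : ℤ)).toNat < G.deg s.1 := by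
  have hpos : (0 : ℤ) < (G.deg s.1 : ℤ) := by
    exact_mod_cast hwf.1 s.1
  have h1 : 0 ≤ (((s.2 : ℤ)) + e) % (G.deg s.1 : ℤ) := Int.emod_nonneg _ (by omega)
  have h2 : (((s.2 : ℤ)) + e) % (G.deg s.1 : ℤ) < (G.deg s.1 : ℤ) :=
    Int.emod_lt_of_pos _ hpos
  omega

lemma dvalid_step (hwf : G.Wf) (s : V × ℕ) (hs : dvalid G s) (e : ℤ) :
    dvalid G (exStepZ G s e) := by
  have := port_lt G hwf s hs e
  exact hwf.2.1 s.1 _ this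

lemma dvalid_foldl (hwf : G.Wf) : ∀ (l : List ℤ) (s : V × ℕ), dvalid G s →
    dvalid G (l.foldl (exStepZ G) s) := by
  intro l
  induction l with
  | nil => intro s hs; exact hs
  | cons e rest ih =>
    intro s hs
    exact ih _ (dvalid_step G hwf s hs e)

lemma stepback (hwf : G.Wf) (s : V × ℕ) (hs : dvalid G s) (e : ℤ) :
    exStepZ G (exStepZ G s e) 0 = (s.1, ((((s.2 : ℤ)) + e) % (G.deg s.1 : ℤ)).toNat) := by
  set i := ((((s.2 : ℤ)) + e) % (G.deg s.1 : ℤ)).toNat with hi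
  have hilt : i < G.deg s.1 := port_lt G hwf s hs e
  have hb : G.back s.1 i < G.deg (G.nbr s.1 i) := hwf.2.1 s.1 i hilt
  show exStepZ G (G.nbr s.1 i, G.back s.1 i) 0 = (s.1, i)
  have hport : ((((G.back s.1 i : ℕ) : ℤ)) + 0) % (G.deg (G.nbr s.1 i) : ℤ)
      = (G.back s.1 i : ℤ) := by
    rw [add_zero]
    exact Int.emod_eq_of_lt (by positivity) (by exact_mod_cast hb)
  show (G.nbr (G.nbr s.1 i) ((((G.back s.1 i : ℕ) : ℤ) + 0) % (G.deg (G.nbr s.1 i) : ℤ)).toNat,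
        G.back (G.nbr s.1 i) ((((G.back s.1 i : ℕ) : ℤ) + 0) % (G.deg (G.nbr s.1 i) : ℤ)).toNat)
      = (s.1, i)
  rw [hport]
  rw [Int.toNat_natCast]
  rw [hwf.2.2.1 s.1 i hilt, hwf.2.2.2.1 s.1 i hilt]

lemma unwind_port (d : ℤ) (hd : 0 < d) (l : ℤ) (hl0 : 0 ≤ l) (hld : l < d) (e : ℤ) :
    ((l + e) % d - e) % d = l := by
  have h1 : ((l + e) % d - e) % d = ((l + e) - e) % d := by
    conv_lhs => rw [Int.sub_emod]
    conv_rhs => rw [Int.sub_emod]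
    rw [Int.emod_emod_of_dvd _ dvd_rfl]
  rw [h1]
  rw [add_sub_cancel_right]
  exact Int.emod_eq_of_lt hl0 hld

lemma step_inj (hwf : G.Wf) (e : ℤ) (c c' : V × ℕ) (hc : dvalid G c) (hc' : dvalid G c')
    (h : exStepZ G c e = exStepZ G c' e) : c = c' := by
  set i := ((((c.2 : ℤ)) + e) % (G.deg c.1 : ℤ)).toNat with hi
  set i' := ((((c'.2 : ℤ)) + e) % (G.deg c'.1 : ℤ)).toNat with hi'
  have hilt : i < G.deg c.1 := port_lt G hwf c hc e
  have hilt' : i' < G.deg c'.1 := port_lt G hwf c' hc' e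
  have h1 : G.nbr c.1 i = G.nbr c'.1 i' := congrArg Prod.fst h
  have h2 : G.back c.1 i = G.back c'.1 i' := congrArg Prod.snd h
  have hv : c.1 = c'.1 := by
    have h3 := hwf.2.2.1 c.1 i hilt
    have h4 := hwf.2.2.1 c'.1 i' hilt'
    rw [← h3, ← h4, h1, h2]
  have hii : i = i' := by
    have h3 := hwf.2.2.2.1 c.1 i hilt
    have h4 := hwf.2.2.2.1 c'.1 i' hilt'
    rw [← h3, ← h4, h1, h2]
  have hdpos : (0:ℤ) < (G.deg c.1 : ℤ) := by exact_mod_cast hwf.1 c.1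
  have hdpos' : (0:ℤ) < (G.deg c'.1 : ℤ) := by exact_mod_cast hwf.1 c'.1
  have hcast : ((i : ℕ) : ℤ) = (((c.2 : ℤ)) + e) % (G.deg c.1 : ℤ) := by
    rw [hi]
    exact Int.toNat_of_nonneg (Int.emod_nonneg _ (by omega))
  have hcast' : ((i' : ℕ) : ℤ) = (((c'.2 : ℤ)) + e) % (G.deg c'.1 : ℤ) := by
    rw [hi']
    exact Int.toNat_of_nonneg (Int.emod_nonneg _ (by omega))
  have u1 : (((i : ℕ) : ℤ) - e) % (G.deg c.1 : ℤ) = (c.2 : ℤ) := by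
    rw [hcast]
    exact unwind_port (G.deg c.1 : ℤ) hdpos (c.2 : ℤ) (by positivity)
      (by exact_mod_cast hc) e
  have u2 : (((i' : ℕ) : ℤ) - e) % (G.deg c'.1 : ℤ) = (c'.2 : ℤ) := by
    rw [hcast']
    exact unwind_port (G.deg c'.1 : ℤ) hdpos' (c'.2 : ℤ) (by positivity)
      (by exact_mod_cast hc') e
  have hdeq : G.deg c.1 = G.deg c'.1 := by rw [hv]
  have hl : (c.2 : ℤ) = (c'.2 : ℤ) := by
    rw [← u1, ← u2, hii, hdeq]
  have hsnd : c.2 = c'.2 := by exact_mod_cast hl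
  exact Prod.ext hv hsnd

def toOff (t : Fin 3) : ℤ := (t : ℤ) - 1

def retSeq : List ℤ → List ℤ
  | [] => []
  | _ :: rest => 0 :: (rest.map Neg.neg).reverse

lemma step_zero (hwf : G.Wf) (s : V × ℕ) (hs : dvalid G s) :
    exStepZ G s 0 = (G.nbr s.1 s.2, G.back s.1 s.2) := by
  have hport : (((s.2 : ℤ)) + 0) % (G.deg s.1 : ℤ) = (s.2 : ℤ) := by
    rw [add_zero]
    exact Int.emod_eq_of_lt (by positivity) (by exact_mod_cast hs)
  show (G.nbr s.1 ((((s.2:ℤ)) + 0) % (G.deg s.1 : ℤ)).toNat,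
        G.back s.1 ((((s.2:ℤ)) + 0) % (G.deg s.1 : ℤ)).toNat) = _
  rw [hport, Int.toNat_natCast]

lemma ret_lemma (hwf : G.Wf) : ∀ (rest : List ℤ) (e : ℤ) (s : V × ℕ), dvalid G s →
    ((e :: rest) ++ retSeq (e :: rest)).foldl (exStepZ G) s
      = (s.1, ((((s.2 : ℤ)) + e) % (G.deg s.1 : ℤ)).toNat) := by
  intro rest
  induction rest with
  | nil =>
    intro e s hs
    show exStepZ G (exStepZ G s e) 0 = _
    exact stepback G hwf s hs e
  | cons e' rest' ih =>
    intro e s hs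
    set s₁ := exStepZ G s e with hs₁
    have hvs₁ : dvalid G s₁ := dvalid_step G hwf s hs e
    have hlist : (e :: e' :: rest') ++ retSeq (e :: e' :: rest')
        = e :: (((e' :: rest') ++ retSeq (e' :: rest')) ++ [-e']) := by
      show (e :: e' :: rest') ++ (0 :: ((e' :: rest').map Neg.neg).reverse)
        = e :: (((e' :: rest') ++ (0 :: (rest'.map Neg.neg).reverse)) ++ [-e'])
      simp [List.append_assoc]
    rw [hlist]
    show ((((e' :: rest') ++ retSeq (e' :: rest')) ++ [-e']).foldl (exStepZ G) s₁) = _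
    rw [List.foldl_append]
    rw [ih e' s₁ hvs₁]
    show exStepZ G (s₁.1, ((((s₁.2 : ℤ)) + e') % (G.deg s₁.1 : ℤ)).toNat) (-e') = _
    have hdpos : (0:ℤ) < (G.deg s₁.1 : ℤ) := by exact_mod_cast hwf.1 s₁.1
    set p := ((((s₁.2 : ℤ)) + e') % (G.deg s₁.1 : ℤ)).toNat with hp
    have hpc : ((p : ℕ) : ℤ) = (((s₁.2 : ℤ)) + e') % (G.deg s₁.1 : ℤ) := by
      rw [hp]
      exact Int.toNat_of_nonneg (Int.emod_nonneg _ (by omega))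
    have hport : (((p : ℕ) : ℤ) + (-e')) % (G.deg s₁.1 : ℤ) = (s₁.2 : ℤ) := by
      rw [hpc]
      have h2 := unwind_port (G.deg s₁.1 : ℤ) hdpos (s₁.2 : ℤ) (by positivity)
        (by exact_mod_cast hvs₁) e'
      rw [Int.sub_eq_add_neg] at h2
      exact h2
    show (G.nbr s₁.1 ((((p:ℕ):ℤ) + (-e')) % (G.deg s₁.1 : ℤ)).toNat,
          G.back s₁.1 ((((p:ℕ):ℤ) + (-e')) % (G.deg s₁.1 : ℤ)).toNat) = _
    rw [hport, Int.toNat_natCast]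
    rw [← step_zero G hwf s₁ hvs₁]
    exact stepback G hwf s hs e

lemma closed_walk (hwf : G.Wf) (v0 : V) (offs : List ℤ) :
    ((offs ++ retSeq offs).foldl (exStepZ G) (v0, 0)).1 = v0 := by
  cases offs with
  | nil => rfl
  | cons e rest =>
    have hv : dvalid G ((v0, 0) : V × ℕ) := by
      show 0 < G.deg v0
      exact hwf.1 v0
    rw [ret_lemma G hwf rest e (v0, 0) hv]

lemma retSeq_length (offs : List ℤ) : (retSeq offs).length = offs.length := by
  cases offs with
  | nil => rfl
  | cons e rest => simp [retSeq]

lemma retSeq_mem (offs : List ℤ) (h : ∀ x ∈ offs, x = -1 ∨ x = 0 ∨ x = 1) :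
    ∀ x ∈ retSeq offs, x = -1 ∨ x = 0 ∨ x = 1 := by
  cases offs with
  | nil => intro x hx; simp [retSeq] at hx
  | cons e rest =>
    intro x hx
    simp [retSeq] at hx
    rcases hx with hx | hx
    · right; left; exact hx
    · have h2 := h (-x) (by simp [hx])
      rcases h2 with h1 | h1 | h1 <;> omega

section Family

open UXS

def Mz (z : ℕ) : ℕ := 4 * z ^ 2
def Wz (z : ℕ) : ℕ := Mz z * (24 * (Mz z) ^ 2)
def Kz (z : ℕ) : ℕ := 4 * (Mz z) ^ 2
def Tz (z : ℕ) : ℕ := Kz z * Wz z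

def Idx (z : ℕ) : Type := (Fin 3 → Fin (Mz z) → Fin (Mz z)) × Fin (Mz z) × Fin (Mz z)

instance (z : ℕ) : Fintype (Idx z) := by
  unfold Idx
  infer_instance

def rawGood (z : ℕ) (i : Idx z) : Prop := ∀ e, Function.Bijective (i.1 e)

def perm0 (z : ℕ) (i : Idx z) : Fin 3 → Equiv.Perm (Fin (Mz z)) :=
  if h : rawGood z i then fun e => Equiv.ofBijective (i.1 e) (h e) else fun _ => 1

def goodI (z : ℕ) (i : Idx z) : Prop :=
  rawGood z i ∧ UXS.reaches (perm0 z i) i.2.2 i.2.1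

def bsys (z : ℕ) (i : Idx z) : Fin (Mz z) := if goodI z i then i.2.1 else i.2.2

lemma hMz (z : ℕ) (hz : 2 ≤ z) : 16 ≤ Mz z := by
  have : 4 ≤ z ^ 2 := by nlinarith
  unfold Mz
  omega

lemma idx_card_lt (z : ℕ) (hz : 2 ≤ z) : Fintype.card (Idx z) < 8 ^ (Kz z) := by
  have hM : 16 ≤ Mz z := hMz z hz
  set M := Mz z with hMdef
  have hcard : Fintype.card (Idx z) = (M ^ M) ^ 3 * (M * M) := by
    show Fintype.card ((Fin 3 → Fin M → Fin M) × Fin M × Fin M) = _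
    rw [Fintype.card_prod, Fintype.card_prod, Fintype.card_fun, Fintype.card_fun]
    simp
  rw [hcard]
  have h1 : (M ^ M) ^ 3 * (M * M) = M ^ (3 * M + 2) := by
    rw [← pow_mul]
    rw [show M * M = M ^ 2 from by ring]
    rw [← pow_add]
    congr 1
    ring
  rw [h1]
  have h2 : M ^ (3 * M + 2) ≤ (2 ^ M) ^ (3 * M + 2) :=
    Nat.pow_le_pow_left (le_of_lt (Nat.lt_two_pow_self (n := M))) _
  have h3 : (2 ^ M : ℕ) ^ (3 * M + 2) = 2 ^ (M * (3 * M + 2)) := by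
    rw [← pow_mul]
  have h4 : M * (3 * M + 2) < 12 * M ^ 2 := by nlinarith
  have h5 : (2:ℕ) ^ (M * (3 * M + 2)) < 2 ^ (12 * M ^ 2) :=
    Nat.pow_lt_pow_right (by omega) h4
  have h6 : (8:ℕ) ^ (Kz z) = 2 ^ (12 * M ^ 2) := by
    show (8:ℕ) ^ (4 * M ^ 2) = 2 ^ (12 * M ^ 2)
    rw [show (8:ℕ) = 2 ^ 3 from rfl, ← pow_mul]
    congr 1
    ring
  omega

lemma perm0_apply (z : ℕ) (i : Idx z) (h : rawGood z i) (e : Fin 3) (x : Fin (Mz z)) :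
    perm0 z i e x = i.1 e x := by
  rw [perm0, dif_pos h]
  rfl

lemma sum_bound (z : ℕ) (hz : 2 ≤ z) :
    (∑ i : Idx z, avs (perm0 z i) (bsys z i) (Tz z) i.2.2) < 3 ^ (Tz z) := by
  have hper : ∀ i : Idx z, 8 ^ (Kz z) * avs (perm0 z i) (bsys z i) (Tz z) i.2.2
      ≤ 3 ^ (Tz z) := by
    intro i
    by_cases hg : goodI z i
    · have hbs : bsys z i = i.2.1 := if_pos hg
      rw [hbs]
      have := submult (perm0 z i) i.2.1 i.2.2 hg.2 (Kz z)
      rwa [show Fintype.card (Fin (Mz z)) * (24 * Fintype.card (Fin (Mz z)) ^ 2) = Wz z from by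
        rw [Fintype.card_fin]; rfl, show Kz z * Wz z = Tz z from rfl] at this
    · have hbs : bsys z i = i.2.2 := if_neg hg
      rw [hbs, avs_at_b, Nat.mul_zero]
      exact Nat.zero_le _
  have hsum : 8 ^ (Kz z) * (∑ i : Idx z, avs (perm0 z i) (bsys z i) (Tz z) i.2.2)
      ≤ Fintype.card (Idx z) * 3 ^ (Tz z) := by
    rw [Finset.mul_sum]
    calc (∑ i : Idx z, 8 ^ (Kz z) * avs (perm0 z i) (bsys z i) (Tz z) i.2.2)
        ≤ ∑ _i : Idx z, 3 ^ (Tz z) := Finset.sum_le_sum fun i _ => hper i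
      _ = Fintype.card (Idx z) * 3 ^ (Tz z) := by
          rw [Finset.sum_const, Finset.card_univ, smul_eq_mul]
  have hlt : Fintype.card (Idx z) * 3 ^ (Tz z) < 8 ^ (Kz z) * 3 ^ (Tz z) := by
    have hp : 0 < (3:ℕ) ^ (Tz z) := by positivity
    exact (Nat.mul_lt_mul_right hp).mpr (idx_card_lt z hz)
  have := lt_of_le_of_lt hsum hlt
  exact Nat.lt_of_mul_lt_mul_left this

lemma foldl_take_succ {α β : Type} (F : β → α → β) :
    ∀ (l : List α) (j : ℕ) (s : β) (hj : j < l.length),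
    (l.take (j+1)).foldl F s = F ((l.take j).foldl F s) (l.get ⟨j, hj⟩) := by
  intro l
  induction l with
  | nil => intro j s hj; simp at hj
  | cons a l ih =>
    intro j s hj
    cases j with
    | zero => rfl
    | succ j =>
      have hj' : j < l.length := by simpa using hj
      show ((a :: l).take (j+2)).foldl F s = _
      rw [show (a :: l).take (j+2) = a :: l.take (j+1) from rfl,
        show (a :: l).take (j+1) = a :: l.take j from rfl]
      rw [List.foldl_cons, List.foldl_cons]
      exact ih j (F s a) hj'

def buildW (f : List (Fin 3)) : List ℤ := (f.map toOff) ++ retSeq (f.map toOff)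

theorem graph_coverage (z : ℕ) (hz : 2 ≤ z) (f : List (Fin 3)) (hflen : f.length = Tz z)
    (hvis : ∀ i : Idx z, UXS.Vis (perm0 z i) (bsys z i) i.2.2 f)
    (n : ℕ) (G : PGraph (Fin n)) (hn : 0 < n) (hwf : G.Wf) (hconn : G.Conn) (v0 : Fin n) :
    min z n ≤ ((Finset.range ((buildW f).length + 1)).image
      (fun j => exPosZ G v0 (buildW f) j)).card := by
  by_contra hfail0
  have hfail : ((Finset.range ((buildW f).length + 1)).image
      (fun j => exPosZ G v0 (buildW f) j)).card < min z n := Nat.lt_of_not_le (by exact hfail0)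
  clear hfail0
  set w : List ℤ := buildW f with hw
  set stateAt : ℕ → Fin n × ℕ := fun j => (w.take j).foldl (exStepZ G) (v0, 0) with hstateAt
  set Vv : Finset (Fin n) := (Finset.range (w.length + 1)).image (fun j => exPosZ G v0 w j)
    with hVv
  set DD : Finset (Fin n × ℕ) := (Finset.range (w.length + 1)).image stateAt with hDDdef
  have hv0 : ((v0, 0) : Fin n × ℕ) ∈ DD := by
    rw [hDDdef]
    exact Finset.mem_image.mpr ⟨0, by simp, rfl⟩
  have hval0 : dvalid G ((v0, 0) : Fin n × ℕ) := hwf.1 v0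
  have hvalid : ∀ s ∈ DD, dvalid G s := by
    intro s hs
    rw [hDDdef] at hs
    obtain ⟨j, _, rfl⟩ := Finset.mem_image.mp hs
    exact dvalid_foldl G hwf _ _ hval0
  have hfst : ∀ s ∈ DD, s.1 ∈ Vv := by
    intro s hs
    rw [hDDdef] at hs
    obtain ⟨j, hj, rfl⟩ := Finset.mem_image.mp hs
    rw [hVv]
    exact Finset.mem_image.mpr ⟨j, hj, rfl⟩
  have hnbr2 : ∀ s ∈ DD, s = ((v0, 0) : Fin n × ℕ) ∨ G.nbr s.1 s.2 ∈ Vv := by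
    intro s hs
    rw [hDDdef] at hs
    obtain ⟨j, hj, rfl⟩ := Finset.mem_image.mp hs
    cases j with
    | zero => exact Or.inl rfl
    | succ j =>
      right
      have hjlen : j < w.length := by
        have := Finset.mem_range.mp hj
        omega
      have hstep : stateAt (j+1) = exStepZ G (stateAt j) (w.get ⟨j, hjlen⟩) := by
        rw [hstateAt]
        exact foldl_take_succ (exStepZ G) w j (v0, 0) hjlen
      have hprevmem : stateAt j ∈ DD := by
        rw [hDDdef]
        exact Finset.mem_image.mpr ⟨j, by simp [Finset.mem_range]; omega, rfl⟩
      have hprevval : dvalid G (stateAt j) := hvalid _ hprevmem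
      rw [hstep]
      set s' := stateAt j with hs'
      set e := w.get ⟨j, hjlen⟩ with he
      set i := ((((s'.2 : ℤ)) + e) % (G.deg s'.1 : ℤ)).toNat with hi
      have hilt : i < G.deg s'.1 := port_lt G hwf s' hprevval e
      show G.nbr (G.nbr s'.1 i) (G.back s'.1 i) ∈ Vv
      rw [hwf.2.2.1 s'.1 i hilt]
      exact hfst s' hprevmem
  -- cardinality bound on DD
  have hψ : ∀ s ∈ DD.filter (fun s => s ≠ ((v0, 0) : Fin n × ℕ)),
      (s.1, G.nbr s.1 s.2) ∈ Vv ×ˢ Vv := by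
    intro s hs
    obtain ⟨hs1, hs2⟩ := Finset.mem_filter.mp hs
    rcases hnbr2 s hs1 with h | h
    · exact absurd h hs2
    · exact Finset.mem_product.mpr ⟨hfst s hs1, h⟩
  have hψinj : Set.InjOn (fun s : Fin n × ℕ => (s.1, G.nbr s.1 s.2))
      (DD.filter (fun s => s ≠ ((v0, 0) : Fin n × ℕ))) := by
    intro x hx y hy hxy
    have hx1 : x ∈ DD := (Finset.mem_filter.mp (Finset.mem_coe.mp hx)).1
    have hy1 : y ∈ DD := (Finset.mem_filter.mp (Finset.mem_coe.mp hy)).1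
    dsimp only at hxy
    rw [Prod.mk.injEq] at hxy
    obtain ⟨h1, h2⟩ := hxy
    rw [h1] at h2
    have hx2 : x.2 ∈ Set.Iio (G.deg y.1) := by
      have h3 : x.2 < G.deg x.1 := hvalid x hx1
      rw [h1] at h3
      exact h3
    have hy2 : y.2 ∈ Set.Iio (G.deg y.1) := hvalid y hy1
    have := hwf.2.2.2.2.2 y.1 hx2 hy2 h2
    exact Prod.ext h1 this
  have hDDcard : DD.card ≤ Vv.card * Vv.card + 1 := by
    have hsplit : (DD.filter (fun s => s = ((v0, 0) : Fin n × ℕ))).card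
        + (DD.filter (fun s => s ≠ ((v0, 0) : Fin n × ℕ))).card = DD.card :=
      Finset.card_filter_add_card_filter_not _
    have h1 : (DD.filter (fun s => s = ((v0, 0) : Fin n × ℕ))).card ≤ 1 := by
      have : DD.filter (fun s => s = ((v0, 0) : Fin n × ℕ)) ⊆ {((v0, 0) : Fin n × ℕ)} := by
        intro x hx
        have := (Finset.mem_filter.mp hx).2
        simp [this]
      have := Finset.card_le_card this
      simpa using this
    have h2 : (DD.filter (fun s => s ≠ ((v0, 0) : Fin n × ℕ))).card ≤ (Vv ×ˢ Vv).card :=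
      Finset.card_le_card_of_injOn _ hψ hψinj
    rw [Finset.card_product] at h2
    omega
  have hVz : Vv.card + 1 ≤ z := by
    have h1 : Vv.card < min z n := hfail
    omega
  have hVn : Vv.card < n := by
    have h1 : Vv.card < min z n := hfail
    omega
  have hDDM : 2 * DD.card ≤ Mz z := by
    obtain ⟨y, hy⟩ : ∃ y, z = y + 1 := ⟨z - 1, by omega⟩
    have hVy : Vv.card ≤ y := by omega
    have : DD.card ≤ y * y + 1 := by
      have := Nat.mul_le_mul hVy hVy
      omega
    have hMzval : Mz z = 4 * (y+1)^2 := by rw [hy]; rfl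
    nlinarith
  have hm₀ : DD.card ≤ Mz z := by omega
  -- embed DD into Fin (Mz z)
  set κ := DD.equivFin with hκ
  set ι : {x // x ∈ DD} → Fin (Mz z) := fun d => Fin.castLE hm₀ (κ d) with hι
  have hιinj : Function.Injective ι := by
    intro a b hab
    apply κ.injective
    rw [hι] at hab
    exact Fin.castLE_injective hm₀ hab
  set DF : Finset (Fin (Mz z)) := DD.attach.image ι with hDF
  have hmemDF : ∀ d : {x // x ∈ DD}, ι d ∈ DF := by
    intro d
    rw [hDF]
    exact Finset.mem_image.mpr ⟨d, Finset.mem_attach _ _, rfl⟩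
  have hDFcard : DF.card = DD.card := by
    rw [hDF, Finset.card_image_of_injective _ hιinj, Finset.card_attach]
  have hDF2 : 2 * DF.card ≤ Fintype.card (Fin (Mz z)) := by
    rw [hDFcard, Fintype.card_fin]
    omega
  -- partial maps and their completions
  set Pe : Fin 3 → Fin (Mz z) → Prop :=
    fun e x => ∃ d : {s // s ∈ DD}, ι d = x ∧ exStepZ G (↑d) (toOff e) ∈ DD with hPe
  set Ae : Fin 3 → Finset (Fin (Mz z)) := fun e => DF.filter (Pe e) with hAe
  set ge : Fin 3 → Fin (Mz z) → Fin (Mz z) := fun e x =>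
    if hx : Pe e x then ι ⟨exStepZ G (↑(hx.choose)) (toOff e), hx.choose_spec.2⟩ else x
    with hgedef
  have hge : ∀ (e : Fin 3) (d : {s // s ∈ DD}) (h2 : exStepZ G (↑d) (toOff e) ∈ DD),
      ge e (ι d) = ι ⟨exStepZ G (↑d) (toOff e), h2⟩ := by
    intro e d h2
    have hP : Pe e (ι d) := ⟨d, rfl, h2⟩
    rw [hgedef]
    simp only [dif_pos hP]
    have hch : hP.choose = d := hιinj hP.choose_spec.1
    apply congrArg ι
    apply Subtype.ext
    show exStepZ G (↑(hP.choose)) (toOff e) = exStepZ G (↑d) (toOff e)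
    rw [hch]
  have hAe_mem : ∀ (e : Fin 3) (d : {s // s ∈ DD}), exStepZ G (↑d) (toOff e) ∈ DD →
      ι d ∈ Ae e := by
    intro e d h2
    rw [hAe]
    exact Finset.mem_filter.mpr ⟨hmemDF d, ⟨d, rfl, h2⟩⟩
  have hcomp : ∀ e : Fin 3, ∃ π : Equiv.Perm (Fin (Mz z)),
      (∀ a ∈ Ae e, π a = ge e a) ∧ (∀ x ∈ DF, x ∉ Ae e → π x ∉ DF) := by
    intro e
    refine completion DF (Ae e) (ge e) (by rw [hAe]; exact Finset.filter_subset _ _) ?_ ?_ hDF2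
    · intro a ha
      obtain ⟨haDF, d, hιd, h2⟩ := Finset.mem_filter.mp ha
      rw [← hιd, hge e d h2]
      exact hmemDF _
    · intro x hx y hy hxy
      obtain ⟨hxDF, dx, hιdx, h2x⟩ := Finset.mem_filter.mp hx
      obtain ⟨hyDF, dy, hιdy, h2y⟩ := Finset.mem_filter.mp hy
      rw [← hιdx, hge e dx h2x] at hxy
      rw [← hιdy, hge e dy h2y] at hxy
      have hsub : (⟨exStepZ G (↑dx) (toOff e), h2x⟩ : {s // s ∈ DD})
          = ⟨exStepZ G (↑dy) (toOff e), h2y⟩ := hιinj hxy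
      have hstep : exStepZ G (↑dx) (toOff e) = exStepZ G (↑dy) (toOff e) :=
        congrArg Subtype.val hsub
      have hd : (↑dx : Fin n × ℕ) = ↑dy :=
        step_inj G hwf (toOff e) _ _ (hvalid _ dx.2) (hvalid _ dy.2) hstep
      rw [← hιdx, ← hιdy]
      exact congrArg ι (Subtype.ext hd)
  choose π hπ1 hπ2 using hcomp
  set d0x : Fin (Mz z) := ι ⟨(v0, 0), hv0⟩ with hd0x
  have hC1 : ∀ (e : Fin 3) (d : {s // s ∈ DD}) (h2 : exStepZ G (↑d) (toOff e) ∈ DD),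
      π e (ι d) = ι ⟨exStepZ G (↑d) (toOff e), h2⟩ := by
    intro e d h2
    rw [hπ1 e _ (hAe_mem e d h2), hge e d h2]
  have hC2 : ∀ (e : Fin 3) (d : {s // s ∈ DD}), exStepZ G (↑d) (toOff e) ∉ DD →
      π e (ι d) ∉ DF := by
    intro e d h2
    refine hπ2 e _ (hmemDF d) ?_
    intro hmem
    obtain ⟨_, d', hιd', h2'⟩ := Finset.mem_filter.mp hmem
    have : d' = d := hιinj hιd'
    rw [this] at h2'
    exact h2 h2'
  -- escape point
  have hescape : ∃ x, UXS.reaches π d0x x ∧ x ∉ DF := by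
    by_contra hno
    push_neg at hno
    set P : Fin n × ℕ → Prop :=
      fun s => ∃ h : s ∈ DD, UXS.reaches π d0x (ι ⟨s, h⟩) with hP
    have hcl1 : ∀ s, P s → ∀ e : Fin 3, P (exStepZ G s (toOff e)) := by
      intro s hs e
      obtain ⟨hmem, hr⟩ := hs
      have hr2 : UXS.reaches π d0x (π e (ι ⟨s, hmem⟩)) :=
        Relation.ReflTransGen.tail hr ⟨e, rfl⟩
      by_cases h2 : exStepZ G s (toOff e) ∈ DD
      · refine ⟨h2, ?_⟩
        rw [← hC1 e ⟨s, hmem⟩ h2]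
        exact hr2
      · exfalso
        exact hC2 e ⟨s, hmem⟩ h2 (hno _ hr2)
    have hoff2 : toOff 2 = 1 := by decide
    have hoff1 : toOff 1 = 0 := by decide
    have hoff0 : toOff 0 = -1 := by decide
    have hcl2 : ∀ s, P s → P (s.1, (s.2 + 1) % G.deg s.1) := by
      intro s hs
      have hsv : dvalid G s := hvalid s hs.1
      have h1 := hcl1 _ (hcl1 s hs 2) 1
      rw [hoff2, hoff1] at h1
      rw [stepback G hwf s hsv 1] at h1
      have hcast : ((((s.2 : ℤ)) + 1) % (G.deg s.1 : ℤ)).toNat = (s.2 + 1) % G.deg s.1 := by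
        have h3 : ((s.2 : ℤ)) + 1 = ((s.2 + 1 : ℕ) : ℤ) := by push_cast; ring
        rw [h3, ← Int.natCast_mod, Int.toNat_natCast]
      rwa [hcast] at h1
    have hcl3 : ∀ s, P s → ∀ k : ℕ, P (s.1, (s.2 + k) % G.deg s.1) := by
      intro s hs k
      induction k with
      | zero =>
        have hsv : dvalid G s := hvalid s hs.1
        have : (s.2 + 0) % G.deg s.1 = s.2 := by
          rw [Nat.add_zero]
          exact Nat.mod_eq_of_lt hsv
        rw [this]
        exact hs
      | succ k ih =>
        have h1 := hcl2 _ ih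
        have : ((s.2 + k) % G.deg s.1 + 1) % G.deg s.1 = (s.2 + (k+1)) % G.deg s.1 := by
          rw [Nat.mod_add_mod, show s.2 + k + 1 = s.2 + (k + 1) from by omega]
        rw [this] at h1
        exact h1
    have hcl4 : ∀ s, P s → ∀ l' : ℕ, l' < G.deg s.1 → P (s.1, l') := by
      intro s hs l' hl'
      have hsv : dvalid G s := hvalid s hs.1
      have hs2 : s.2 < G.deg s.1 := hsv
      have h1 := hcl3 s hs (G.deg s.1 - s.2 + l')
      have : (s.2 + (G.deg s.1 - s.2 + l')) % G.deg s.1 = l' := by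
        rw [show s.2 + (G.deg s.1 - s.2 + l') = G.deg s.1 + l' from by omega]
        rw [Nat.add_mod_left]
        exact Nat.mod_eq_of_lt hl'
      rwa [this] at h1
    have hcl5 : ∀ s, P s → ∀ j : ℕ, j < G.deg s.1 → P (G.nbr s.1 j, G.back s.1 j) := by
      intro s hs j hj
      have h1 := hcl4 s hs j hj
      have h2 := hcl1 _ h1 1
      rw [hoff1] at h2
      rw [step_zero G hwf (s.1, j) hj] at h2
      exact h2
    have hcl6 : ∀ v : Fin n, ∃ l, P (v, l) := by
      intro v
      have hrt := hconn v0 v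
      induction hrt with
      | refl =>
        refine ⟨0, hv0, ?_⟩
        rw [hd0x]
        exact Relation.ReflTransGen.refl
      | @tail x y _ hstep ih =>
        obtain ⟨l, hPl⟩ := ih
        obtain ⟨i, hi, hnbri⟩ := hstep
        have h1 := hcl5 (x, l) hPl i hi
        rw [hnbri] at h1
        exact ⟨_, h1⟩
    have hall : ∀ v : Fin n, v ∈ Vv := by
      intro v
      obtain ⟨l, hmem, _⟩ := hcl6 v
      exact hfst (v, l) hmem
    have : (Finset.univ : Finset (Fin n)) ⊆ Vv := fun v _ => hall v
    have hcard := Finset.card_le_card this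
    rw [Finset.card_univ, Fintype.card_fin] at hcard
    omega
  obtain ⟨bx, hbreach, hbDF⟩ := hescape
  -- build the family index
  set istar : Idx z := (fun e => ⇑(π e), bx, d0x) with histar
  have hraw : rawGood z istar := fun e => (π e).bijective
  have hperm : perm0 z istar = π := by
    funext e
    apply Equiv.ext
    intro x
    rw [perm0, dif_pos hraw]
    rfl
  have hgood : goodI z istar := by
    refine ⟨hraw, ?_⟩
    show UXS.reaches (perm0 z istar) d0x bx
    rw [hperm]
    exact hbreach
  have hbs : bsys z istar = bx := by
    rw [bsys, if_pos hgood]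
  have hvisi := hvis istar
  rw [hbs, hperm] at hvisi
  -- hvisi : UXS.Vis π bx d0x f
  -- but the walk from (v0,0) along f stays in DD, contradiction
  have hnoVis : ∀ (fl : List (Fin 3)) (d : {s // s ∈ DD}),
      (∀ j, j ≤ fl.length →
        (fl.take j).foldl (fun c t => exStepZ G c (toOff t)) (↑d) ∈ DD) →
      ¬ UXS.Vis π bx (ι d) fl := by
    intro fl
    induction fl with
    | nil =>
      intro d _ hVis
      have : ι d = bx := hVis
      rw [← this] at hbDF
      exact hbDF (hmemDF d)
    | cons e f' ih =>
      intro d hyp hVis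
      have h1 : exStepZ G (↑d) (toOff e) ∈ DD := by
        have := hyp 1 (by simp)
        simpa using this
      rcases hVis with hVis | hVis
      · rw [← hVis] at hbDF
        exact hbDF (hmemDF d)
      · rw [hC1 e d h1] at hVis
        refine ih ⟨exStepZ G (↑d) (toOff e), h1⟩ ?_ hVis
        intro j hj
        have := hyp (j+1) (by simpa using hj)
        simpa using this
  refine hnoVis f ⟨(v0, 0), hv0⟩ ?_ hvisi
  intro j hj
  have hwtake : ((f.take j).map toOff) = w.take j := by
    rw [hw]
    show (f.take j).map toOff = (buildW f).take j
    rw [buildW]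
    rw [List.take_append_of_le_length (by rw [List.length_map]; exact hj)]
    rw [List.map_take]
  have : (f.take j).foldl (fun c t => exStepZ G c (toOff t)) ((v0, 0) : Fin n × ℕ)
      = stateAt j := by
    show (f.take j).foldl (fun c t => exStepZ G c (toOff t)) ((v0, 0) : Fin n × ℕ)
        = (w.take j).foldl (exStepZ G) (v0, 0)
    rw [← hwtake, List.foldl_map]
  rw [this]
  rw [hDDdef]
  refine Finset.mem_image.mpr ⟨j, ?_, rfl⟩
  rw [Finset.mem_range]
  have : f.length ≤ w.length := by
    rw [hw]
    show f.length ≤ (buildW f).length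
    rw [buildW, List.length_append, List.length_map]
    omega
  omega

end Family

end UXSG



/-- There is a constant `C` such that for every `z` there is an
exploration sequence `w ∈ {-1,0,1}*` of length at most `z ^ C` such that in every
connected graph `G` on `n` vertices, from every starting vertex, an agent
following `w` visits at least `min z n` distinct vertices and returns to its
starting vertex (the walk is closed). -/
theorem short_uxs_general :
    ∃ C : ℕ, 0 < C ∧ ∀ z : ℕ, ∃ w : List ℤ,
      (∀ e ∈ w, e = -1 ∨ e = 0 ∨ e = 1) ∧ w.length ≤ z ^ C ∧
      ∀ (n : ℕ) (G : PGraph (Fin n)), 0 < n → G.Wf → G.Conn → ∀ v0 : Fin n,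
        min z n ≤ ((Finset.range (w.length + 1)).image (fun j => exPosZ G v0 w j)).card ∧
        exPosZ G v0 w w.length = v0 := by
  refine ⟨28, by norm_num, ?_⟩
  intro z
  by_cases hz : 2 ≤ z
  · obtain ⟨f, hflen, hfvis⟩ := UXS.extraction (I := UXSG.Idx z) (fun _ => Fin (UXSG.Mz z))
      (UXSG.perm0 z) (UXSG.bsys z) (UXSG.Tz z) (fun i => i.2.2) (UXSG.sum_bound z hz)
    refine ⟨UXSG.buildW f, ?_, ?_, ?_⟩
    · intro e he
      rw [UXSG.buildW] at he
      have hoff : ∀ t : Fin 3, UXSG.toOff t = -1 ∨ UXSG.toOff t = 0 ∨ UXSG.toOff t = 1 := by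
        decide
      rcases List.mem_append.mp he with he | he
      · obtain ⟨t, _, rfl⟩ := List.mem_map.mp he
        exact hoff t
      · refine UXSG.retSeq_mem _ ?_ e he
        intro x hx
        obtain ⟨t, _, rfl⟩ := List.mem_map.mp hx
        exact hoff t
    · have hlen : (UXSG.buildW f).length = 2 * UXSG.Tz z := by
        rw [UXSG.buildW, List.length_append, UXSG.retSeq_length, List.length_map, hflen]
        ring
      rw [hlen]
      have hT : UXSG.Tz z = 98304 * z ^ 10 := by
        simp only [UXSG.Tz, UXSG.Kz, UXSG.Wz, UXSG.Mz]
        ring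
      rw [hT]
      have h2 : (196608 : ℕ) ≤ z ^ 18 :=
        le_trans (by norm_num : (196608:ℕ) ≤ 2 ^ 18) (Nat.pow_le_pow_left hz 18)
      calc 2 * (98304 * z ^ 10) = 196608 * z ^ 10 := by ring
        _ ≤ z ^ 18 * z ^ 10 := Nat.mul_le_mul_right _ h2
        _ = z ^ 28 := by rw [← pow_add]
    · intro n G hn hwf hconn v0
      constructor
      · exact UXSG.graph_coverage z hz f hflen hfvis n G hn hwf hconn v0
      · show ((((UXSG.buildW f).take (UXSG.buildW f).length).foldl (exStepZ G) (v0, 0)).1) = v0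
        rw [List.take_length]
        exact UXSG.closed_walk G hwf v0 (f.map UXSG.toOff)
  · refine ⟨[], by simp, by simp, ?_⟩
    intro n G hn hwf hconn v0
    constructor
    · have h1 : min z n ≤ 1 := by omega
      have h2 : 0 < ((Finset.range (([] : List ℤ).length + 1)).image
          (fun j => exPosZ G v0 [] j)).card := by
        rw [Finset.card_pos]
        exact ⟨exPosZ G v0 [] 0, Finset.mem_image.mpr ⟨0, by simp, rfl⟩⟩
      omega
    · rfl
end
end
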